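/- arXiv:1209.2179 — 12 statements merged into one kernel-verified Lean document; each statement's English description precedes it below -/
import Mathlib

section
/- Let g11, g12, g21, g22 > 0 be channel gains and P1, P2 > 0 power budgets. Suppose (R1, R2) lies on the rate region frontier, i.e., (R1, R2) is achievable by some feasible power allocation and no feasible allocation achieves user-1 rate equal to R1 together with user-2 rate strictly greater than R2. If (2^R1 - 1)(2^R2 - 1) ≤ 1, then (R1, R2) is achieved by a feasible power allocation (P11, P21, P12, P22) satisfying P11 + P21 = P1 and P12 + P22 = P2 (both base stations transmit at full power). -/
set_option maxHeartbeats 1000000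


/-- User-1 rate of a power allocation. -/
noncomputable def rate1 (g11 g12 P11 P21 P12 P22 : ℝ) : ℝ :=
  Real.logb 2 (1 + (g11 * P11 + g12 * P12) / (1 + g11 * P21 + g12 * P22))

/-- User-2 rate of a power allocation. -/
noncomputable def rate2 (g21 g22 P11 P21 P12 P22 : ℝ) : ℝ :=
  Real.logb 2 (1 + (g21 * P21 + g22 * P22) / (1 + g21 * P11 + g22 * P12))

/-- Feasibility of a power allocation under per-BTS power budgets. -/
def feasible (P1 P2 P11 P21 P12 P22 : ℝ) : Prop :=
  0 ≤ P11 ∧ 0 ≤ P21 ∧ 0 ≤ P12 ∧ 0 ≤ P22 ∧ P11 + P21 ≤ P1 ∧ P12 + P22 ≤ P2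

theorem frontier_full_power
    (g11 g12 g21 g22 P1 P2 R1 R2 : ℝ)
    (hg11 : 0 < g11) (hg12 : 0 < g12) (hg21 : 0 < g21) (hg22 : 0 < g22)
    (hP1 : 0 < P1) (hP2 : 0 < P2)
    (hach : ∃ P11 P21 P12 P22, feasible P1 P2 P11 P21 P12 P22 ∧
      rate1 g11 g12 P11 P21 P12 P22 = R1 ∧ rate2 g21 g22 P11 P21 P12 P22 = R2)
    (hfront : ∀ P11 P21 P12 P22, feasible P1 P2 P11 P21 P12 P22 →
      rate1 g11 g12 P11 P21 P12 P22 = R1 → rate2 g21 g22 P11 P21 P12 P22 ≤ R2)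
    (hcond : ((2 : ℝ) ^ R1 - 1) * ((2 : ℝ) ^ R2 - 1) ≤ 1) :
    ∃ P11 P21 P12 P22, feasible P1 P2 P11 P21 P12 P22 ∧
      rate1 g11 g12 P11 P21 P12 P22 = R1 ∧ rate2 g21 g22 P11 P21 P12 P22 = R2 ∧
      P11 + P21 = P1 ∧ P12 + P22 = P2 := by
  obtain ⟨a, b, c, d, ⟨ha, hb, hc, hd, hs1, hs2⟩, hR1, hR2⟩ := hach
  have hD1pos : 0 < 1 + g11 * b + g12 * d := by positivity
  have hD2pos : 0 < 1 + g21 * a + g22 * c := by positivity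
  set x1 : ℝ := (g11 * a + g12 * c) / (1 + g11 * b + g12 * d) with hx1
  set x2 : ℝ := (g21 * b + g22 * d) / (1 + g21 * a + g22 * c) with hx2
  have hx1nn : 0 ≤ x1 := by positivity
  have hx2nn : 0 ≤ x2 := by positivity
  have h1 : (2:ℝ) ^ R1 = 1 + x1 := by
    rw [← hR1, rate1, Real.rpow_logb (by norm_num) (by norm_num) (by linarith)]
  have h2 : (2:ℝ) ^ R2 = 1 + x2 := by
    rw [← hR2, rate2, Real.rpow_logb (by norm_num) (by norm_num) (by linarith)]
  have hcond' : x1 * x2 ≤ 1 := by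
    rw [h1, h2] at hcond; nlinarith [hcond]
  have hx1p : (0:ℝ) < 1 + x1 := by linarith
  set η1 : ℝ := (P1 - (a + b)) / (1 + x1) with hη1
  set η2 : ℝ := (P2 - (c + d)) / (1 + x1) with hη2
  have hη1nn : 0 ≤ η1 := div_nonneg (by linarith) (le_of_lt hx1p)
  have hη2nn : 0 ≤ η2 := div_nonneg (by linarith) (le_of_lt hx1p)
  have hsum1 : (a + x1 * η1) + (b + η1) = P1 := by
    have : (1 + x1) * η1 = P1 - (a + b) := by
      rw [hη1]; field_simp
    linarith
  have hsum2 : (c + x1 * η2) + (d + η2) = P2 := by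
    have : (1 + x1) * η2 = P2 - (c + d) := by
      rw [hη2]; field_simp
    linarith
  have hfeas : feasible P1 P2 (a + x1 * η1) (b + η1) (c + x1 * η2) (d + η2) := by
    refine ⟨by positivity, by positivity, by positivity, by positivity, ?_, ?_⟩
    · rw [hsum1]
    · rw [hsum2]
  -- new denominators
  have hD1'pos : 0 < 1 + g11 * (b + η1) + g12 * (d + η2) := by positivity
  have hD2'pos : 0 < 1 + g21 * (a + x1 * η1) + g22 * (c + x1 * η2) := by positivity
  have hS1 : g11 * a + g12 * c = x1 * (1 + g11 * b + g12 * d) := by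
    rw [hx1]; field_simp
  have hS2 : g21 * b + g22 * d = x2 * (1 + g21 * a + g22 * c) := by
    rw [hx2]; field_simp
  -- rate1 is preserved exactly
  have hrate1' : rate1 g11 g12 (a + x1 * η1) (b + η1) (c + x1 * η2) (d + η2) = R1 := by
    rw [rate1]
    have hratio : (g11 * (a + x1 * η1) + g12 * (c + x1 * η2)) /
        (1 + g11 * (b + η1) + g12 * (d + η2)) = x1 := by
      rw [div_eq_iff (ne_of_gt hD1'pos)]
      linear_combination hS1
    rw [hratio, ← h1, Real.logb_rpow (by norm_num) (by norm_num)]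
  -- rate2 does not decrease
  have hrate2ge : R2 ≤ rate2 g21 g22 (a + x1 * η1) (b + η1) (c + x1 * η2) (d + η2) := by
    rw [rate2, ← hR2, rate2]
    apply Real.logb_le_logb_of_le (by norm_num) (by positivity)
    have key : x2 ≤ (g21 * (b + η1) + g22 * (d + η2)) /
        (1 + g21 * (a + x1 * η1) + g22 * (c + x1 * η2)) := by
      rw [le_div_iff₀ hD2'pos]
      have hΔ : 0 ≤ g21 * η1 + g22 * η2 := by positivity
      have hkey2 : 0 ≤ (g21 * η1 + g22 * η2) * (1 - x1 * x2) :=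
        mul_nonneg hΔ (by linarith)
      nlinarith [hS2, hkey2]
    linarith [key, hx2]
  have hrate2le := hfront _ _ _ _ hfeas hrate1'
  exact ⟨a + x1 * η1, b + η1, c + x1 * η2, d + η2, hfeas, hrate1',
    le_antisymm hrate2le hrate2ge, hsum1, hsum2⟩
end

section
/- Let g11, g12, g21, g22 > 0 be channel gains and P1, P2 > 0 power budgets. Suppose (R1, R2) lies on the rate region frontier. If (2^R1 - 1)(2^R2 - 1) > 1, then every feasible power allocation (P11, P21, P12, P22) achieving (R1, R2) satisfies P11·P21 = 0 and P12·P22 = 0 (each base station transmits only one of the two messages). -/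
set_option maxHeartbeats 1000000 in
lemma aux_single (g11 g12 g21 g22 P1 P2 R1 R2 : ℝ)
    (hg11 : 0 < g11) (hg12 : 0 < g12) (hg21 : 0 < g21) (hg22 : 0 < g22)
    (hfront : ∀ P11 P21 P12 P22, feasible P1 P2 P11 P21 P12 P22 →
      rate1 g11 g12 P11 P21 P12 P22 = R1 → rate2 g21 g22 P11 P21 P12 P22 ≤ R2)
    (hcond : 1 < ((2 : ℝ) ^ R1 - 1) * ((2 : ℝ) ^ R2 - 1)) :
    ∀ P11 P21 P12 P22, feasible P1 P2 P11 P21 P12 P22 →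
      rate1 g11 g12 P11 P21 P12 P22 = R1 → rate2 g21 g22 P11 P21 P12 P22 = R2 →
      P11 * P21 = 0 := by
  intro P11 P21 P12 P22 hfeas hr1 hr2
  obtain ⟨h11, h21, h12, h22, hs1, hs2⟩ := hfeas
  by_contra hne
  obtain ⟨hne1, hne2⟩ := mul_ne_zero_iff.mp hne
  have hP11 : 0 < P11 := lt_of_le_of_ne h11 (Ne.symm hne1)
  have hP21 : 0 < P21 := lt_of_le_of_ne h21 (Ne.symm hne2)
  have hD1 : (0:ℝ) < 1 + g11 * P21 + g12 * P22 := by nlinarith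
  have hD2 : (0:ℝ) < 1 + g21 * P11 + g22 * P12 := by nlinarith
  obtain ⟨x, hxdef⟩ : ∃ x : ℝ, x = (g11 * P11 + g12 * P12) / (1 + g11 * P21 + g12 * P22) :=
    ⟨_, rfl⟩
  obtain ⟨y, hydef⟩ : ∃ y : ℝ, y = (g21 * P21 + g22 * P22) / (1 + g21 * P11 + g22 * P12) :=
    ⟨_, rfl⟩
  have hx0 : 0 ≤ x := hxdef ▸ div_nonneg (by nlinarith) hD1.le
  have hy0 : 0 ≤ y := hydef ▸ div_nonneg (by nlinarith) hD2.le
  have h2R1 : (2 : ℝ) ^ R1 = 1 + x := by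
    rw [← hr1, hxdef]; unfold rate1
    exact Real.rpow_logb (by norm_num) (by norm_num) (by linarith)
  have h2R2 : (2 : ℝ) ^ R2 = 1 + y := by
    rw [← hr2, hydef]; unfold rate2
    exact Real.rpow_logb (by norm_num) (by norm_num) (by linarith)
  have hxy : 1 < x * y := by rw [h2R1, h2R2] at hcond; linarith [hcond]
  have hxpos : 0 < x := by nlinarith
  have hypos : 0 < y := by nlinarith
  -- numerator identities
  have hnum1 : g11 * P11 + g12 * P12 = x * (1 + g11 * P21 + g12 * P22) := by
    rw [hxdef]; field_simp
  have hnum2 : g21 * P21 + g22 * P22 = y * (1 + g21 * P11 + g22 * P12) := by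
    rw [hydef]; field_simp
  -- perturbation
  obtain ⟨ε, hεpos, hε1, hε2⟩ : ∃ ε : ℝ, 0 < ε ∧ ε ≤ P21 ∧ x * ε ≤ P11 := by
    refine ⟨min P21 (P11 / x), lt_min hP21 (div_pos hP11 hxpos), min_le_left _ _, ?_⟩
    have h := min_le_right P21 (P11 / x)
    calc x * min P21 (P11 / x) ≤ x * (P11 / x) := by nlinarith
      _ = P11 := by field_simp
  have hQ11 : 0 ≤ P11 - x * ε := by linarith
  have hQ21 : 0 ≤ P21 - ε := by linarith
  have hfeas' : feasible P1 P2 (P11 - x * ε) (P21 - ε) P12 P22 :=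
    ⟨hQ11, hQ21, h12, h22, by nlinarith, hs2⟩
  have hD1' : (0:ℝ) < 1 + g11 * (P21 - ε) + g12 * P22 := by nlinarith
  have hD2' : (0:ℝ) < 1 + g21 * (P11 - x * ε) + g22 * P12 := by nlinarith
  have hrat1 : (g11 * (P11 - x * ε) + g12 * P12) / (1 + g11 * (P21 - ε) + g12 * P22) = x := by
    have hnum' : g11 * (P11 - x * ε) + g12 * P12 = x * (1 + g11 * (P21 - ε) + g12 * P22) := by
      nlinarith [hnum1]
    rw [hnum', mul_div_assoc, div_self hD1'.ne', mul_one]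
  have hr1' : rate1 g11 g12 (P11 - x * ε) (P21 - ε) P12 P22 = R1 := by
    unfold rate1
    rw [hrat1, hxdef, ← hr1]; rfl
  -- new user-2 ratio is strictly larger
  have hyr : y < (g21 * (P21 - ε) + g22 * P22) / (1 + g21 * (P11 - x * ε) + g22 * P12) := by
    rw [lt_div_iff₀ hD2']
    nlinarith [hnum2, mul_pos hg21 hεpos, mul_pos (mul_pos hg21 hεpos) hD2]
  have hr2' : R2 < rate2 g21 g22 (P11 - x * ε) (P21 - ε) P12 P22 := by
    rw [← hr2]
    unfold rate2
    exact Real.logb_lt_logb (by norm_num) (by linarith) (by linarith)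
  exact absurd (hfront _ _ P12 P22 hfeas' hr1') (not_le.mpr hr2')

theorem frontier_single_message
    (g11 g12 g21 g22 P1 P2 R1 R2 : ℝ)
    (hg11 : 0 < g11) (hg12 : 0 < g12) (hg21 : 0 < g21) (hg22 : 0 < g22)
    (hP1 : 0 < P1) (hP2 : 0 < P2)
    (hach : ∃ P11 P21 P12 P22, feasible P1 P2 P11 P21 P12 P22 ∧
      rate1 g11 g12 P11 P21 P12 P22 = R1 ∧ rate2 g21 g22 P11 P21 P12 P22 = R2)
    (hfront : ∀ P11 P21 P12 P22, feasible P1 P2 P11 P21 P12 P22 →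
      rate1 g11 g12 P11 P21 P12 P22 = R1 → rate2 g21 g22 P11 P21 P12 P22 ≤ R2)
    (hcond : 1 < ((2 : ℝ) ^ R1 - 1) * ((2 : ℝ) ^ R2 - 1)) :
    ∀ P11 P21 P12 P22, feasible P1 P2 P11 P21 P12 P22 →
      rate1 g11 g12 P11 P21 P12 P22 = R1 → rate2 g21 g22 P11 P21 P12 P22 = R2 →
      P11 * P21 = 0 ∧ P12 * P22 = 0 := by
  intro P11 P21 P12 P22 hfeas hr1 hr2
  have swapr1 : ∀ a b c d e f : ℝ, rate1 a b c d e f = rate1 b a e f c d := by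
    intro a b c d e f; unfold rate1; ring_nf
  have swapr2 : ∀ a b c d e f : ℝ, rate2 a b c d e f = rate2 b a e f c d := by
    intro a b c d e f; unfold rate2; ring_nf
  constructor
  · exact aux_single g11 g12 g21 g22 P1 P2 R1 R2 hg11 hg12 hg21 hg22 hfront hcond
      P11 P21 P12 P22 hfeas hr1 hr2
  · refine aux_single g12 g11 g22 g21 P2 P1 R1 R2 hg12 hg11 hg22 hg21 ?_ hcond
      P12 P22 P11 P21 ⟨hfeas.2.2.1, hfeas.2.2.2.1, hfeas.1, hfeas.2.1,
        hfeas.2.2.2.2.2, hfeas.2.2.2.2.1⟩ (by rw [← swapr1]; exact hr1)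
      (by rw [← swapr2]; exact hr2)
    intro Q11 Q21 Q12 Q22 hf h1
    rw [← swapr2]
    exact hfront Q12 Q22 Q11 Q21 ⟨hf.2.2.1, hf.2.2.2.1, hf.1, hf.2.1,
      hf.2.2.2.2.2, hf.2.2.2.2.1⟩ (by rw [swapr1]; exact h1)
end

section
/- Let g11, g12, g21, g22 > 0 and P1, P2 > 0. Let (P11, P21, P12, P22) be a feasible power allocation achieving rates (R1, R2). If (2^R1 - 1)(2^R2 - 1) < 1 and P12 + P22 < P2, then there exists a feasible power allocation achieving user-1 rate exactly R1 and user-2 rate strictly greater than R2. -/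
set_option maxHeartbeats 1000000 in
theorem slack_power_improvable
    (g11 g12 g21 g22 P1 P2 R1 R2 : ℝ)
    (hg11 : 0 < g11) (hg12 : 0 < g12) (hg21 : 0 < g21) (hg22 : 0 < g22)
    (hP1 : 0 < P1) (hP2 : 0 < P2)
    (P11 P21 P12 P22 : ℝ)
    (hfeas : feasible P1 P2 P11 P21 P12 P22)
    (hR1 : rate1 g11 g12 P11 P21 P12 P22 = R1)
    (hR2 : rate2 g21 g22 P11 P21 P12 P22 = R2)
    (hcond : ((2 : ℝ) ^ R1 - 1) * ((2 : ℝ) ^ R2 - 1) < 1)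
    (hslack : P12 + P22 < P2) :
    ∃ Q11 Q21 Q12 Q22, feasible P1 P2 Q11 Q21 Q12 Q22 ∧
      rate1 g11 g12 Q11 Q21 Q12 Q22 = R1 ∧ R2 < rate2 g21 g22 Q11 Q21 Q12 Q22 := by
  obtain ⟨h11, h21, h12, h22, hb1, hb2⟩ := hfeas
  obtain ⟨S1, hS1def⟩ : ∃ x, x = g11 * P11 + g12 * P12 := ⟨_, rfl⟩
  obtain ⟨I1, hI1def⟩ : ∃ x, x = 1 + g11 * P21 + g12 * P22 := ⟨_, rfl⟩
  obtain ⟨N2, hN2def⟩ : ∃ x, x = g21 * P21 + g22 * P22 := ⟨_, rfl⟩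
  obtain ⟨D2, hD2def⟩ : ∃ x, x = 1 + g21 * P11 + g22 * P12 := ⟨_, rfl⟩
  have hS1 : 0 ≤ S1 := by
    have := mul_nonneg hg11.le h11; have := mul_nonneg hg12.le h12
    rw [hS1def]; linarith
  have hI1 : 0 < I1 := by
    have := mul_nonneg hg11.le h21; have := mul_nonneg hg12.le h22
    rw [hI1def]; linarith
  have hN2 : 0 ≤ N2 := by
    have := mul_nonneg hg21.le h21; have := mul_nonneg hg22.le h22
    rw [hN2def]; linarith
  have hD2 : 0 < D2 := by
    have := mul_nonneg hg21.le h11; have := mul_nonneg hg22.le h12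
    rw [hD2def]; linarith
  have harg1 : (0:ℝ) < 1 + S1 / I1 := by positivity
  have harg2 : (0:ℝ) < 1 + N2 / D2 := by positivity
  have hrw1 : rate1 g11 g12 P11 P21 P12 P22 = Real.logb 2 (1 + S1 / I1) := by
    rw [rate1, hS1def, hI1def]
  have hrw2 : rate2 g21 g22 P11 P21 P12 P22 = Real.logb 2 (1 + N2 / D2) := by
    rw [rate2, hN2def, hD2def]
  rw [hrw1] at hR1
  rw [hrw2] at hR2
  have hpow1 : (2:ℝ) ^ R1 = 1 + S1 / I1 := by
    rw [← hR1]; exact Real.rpow_logb (by norm_num) (by norm_num) harg1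
  have hpow2 : (2:ℝ) ^ R2 = 1 + N2 / D2 := by
    rw [← hR2]; exact Real.rpow_logb (by norm_num) (by norm_num) harg2
  obtain ⟨a, hadef⟩ : ∃ x, x = (2:ℝ) ^ R1 - 1 := ⟨_, rfl⟩
  have ha : a = S1 / I1 := by rw [hadef, hpow1]; ring
  have ha0 : 0 ≤ a := by rw [ha]; positivity
  have haS : S1 = a * I1 := by rw [ha]; field_simp
  obtain ⟨ε, hεdef⟩ : ∃ x, x = (P2 - P12 - P22) / (1 + a) := ⟨_, rfl⟩
  have h1a : (0:ℝ) < 1 + a := by linarith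
  have hε : 0 < ε := by rw [hεdef]; exact div_pos (by linarith) h1a
  have hbudget : (1 + a) * ε = P2 - P12 - P22 := by
    rw [hεdef, mul_div_cancel₀ _ (ne_of_gt h1a)]
  have hkey : a * N2 < D2 := by
    have hb : (2:ℝ) ^ R2 - 1 = N2 / D2 := by rw [hpow2]; ring
    rw [← hadef, hb, ← mul_div_assoc] at hcond
    exact (div_lt_one hD2).mp hcond
  refine ⟨P11, P21, P12 + a * ε, P22 + ε, ⟨h11, h21, ?_, by linarith, hb1, ?_⟩, ?_, ?_⟩
  · have := mul_nonneg ha0 hε.le; linarith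
  · linarith [hbudget]
  · have hden : (0:ℝ) < 1 + g11 * P21 + g12 * (P22 + ε) := by
      rw [hI1def] at hI1
      have := mul_nonneg hg12.le hε.le; linarith
    have hratio : (g11 * P11 + g12 * (P12 + a * ε)) / (1 + g11 * P21 + g12 * (P22 + ε)) = a := by
      rw [div_eq_iff (ne_of_gt hden)]
      have hS1' : g11 * P11 + g12 * P12 = a * (1 + g11 * P21 + g12 * P22) := by
        rw [← hS1def, ← hI1def]; exact haS
      nlinarith [hS1']
    rw [rate1, hratio, hadef]
    have h1 : 1 + ((2:ℝ) ^ R1 - 1) = (2:ℝ) ^ R1 := by ring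
    rw [h1]
    exact Real.logb_rpow (by norm_num) (by norm_num)
  · have hR2' : R2 = Real.logb 2 (1 + N2 / D2) := hR2.symm
    rw [hR2', rate2]
    have hden2 : (0:ℝ) < 1 + g21 * P11 + g22 * (P12 + a * ε) := by
      rw [hD2def] at hD2
      have := mul_nonneg hg22.le (mul_nonneg ha0 hε.le); linarith
    apply Real.logb_lt_logb (by norm_num) harg2
    have hlt : N2 / D2 < (g21 * P21 + g22 * (P22 + ε)) / (1 + g21 * P11 + g22 * (P12 + a * ε)) := by
      rw [div_lt_div_iff₀ hD2 hden2]
      have h1 : g21 * P21 + g22 * (P22 + ε) = N2 + g22 * ε := by rw [hN2def]; ring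
      have h2 : 1 + g21 * P11 + g22 * (P12 + a * ε) = D2 + g22 * (a * ε) := by
        rw [hD2def]; ring
      rw [h1, h2]
      have hmul : g22 * ε * (a * N2) < g22 * ε * D2 :=
        mul_lt_mul_of_pos_left hkey (mul_pos hg22 hε)
      linarith [hmul]
    linarith
end

section
/- Let g11, g12, g21, g22 > 0 and P1, P2 > 0. Let (P11, P21, P12, P22) be a feasible power allocation achieving rates (R1, R2). If (2^R1 - 1)(2^R2 - 1) > 1 and both P12 > 0 and P22 > 0, then there exists a feasible power allocation achieving user-1 rate exactly R1 and user-2 rate strictly greater than R2 (obtained by decreasing P12 and P22). -/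
theorem both_messages_improvable
    (g11 g12 g21 g22 P1 P2 R1 R2 : ℝ)
    (hg11 : 0 < g11) (hg12 : 0 < g12) (hg21 : 0 < g21) (hg22 : 0 < g22)
    (hP1 : 0 < P1) (hP2 : 0 < P2)
    (P11 P21 P12 P22 : ℝ)
    (hfeas : feasible P1 P2 P11 P21 P12 P22)
    (hR1 : rate1 g11 g12 P11 P21 P12 P22 = R1)
    (hR2 : rate2 g21 g22 P11 P21 P12 P22 = R2)
    (hcond : 1 < ((2 : ℝ) ^ R1 - 1) * ((2 : ℝ) ^ R2 - 1))
    (hP12pos : 0 < P12) (hP22pos : 0 < P22) :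
    ∃ Q12 Q22, Q12 ≤ P12 ∧ Q22 ≤ P22 ∧
      feasible P1 P2 P11 P21 Q12 Q22 ∧
      rate1 g11 g12 P11 P21 Q12 Q22 = R1 ∧ R2 < rate2 g21 g22 P11 P21 Q12 Q22 := by
  obtain ⟨h11, h21, h12, h22, hs1, hs2⟩ := hfeas
  set A : ℝ := g11 * P11 + g12 * P12 with hAdef
  set B : ℝ := 1 + g11 * P21 + g12 * P22 with hBdef
  set C : ℝ := g21 * P21 + g22 * P22 with hCdef
  set D : ℝ := 1 + g21 * P11 + g22 * P12 with hDdef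
  have hApos : 0 < A := by rw [hAdef]; positivity
  have hBpos : 0 < B := by rw [hBdef]; positivity
  have hCpos : 0 < C := by rw [hCdef]; positivity
  have hDpos : 0 < D := by rw [hDdef]; positivity
  set t : ℝ := A / B with htdef
  set s : ℝ := C / D with hsdef
  have htpos : 0 < t := div_pos hApos hBpos
  have hspos : 0 < s := div_pos hCpos hDpos
  have htB : t * B = A := by rw [htdef]; field_simp
  have hsD : s * D = C := by rw [hsdef]; field_simp
  have h2R1 : (2 : ℝ) ^ R1 = 1 + t := by
    rw [← hR1, rate1, ← hAdef, ← hBdef, htdef]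
    exact Real.rpow_logb (by norm_num) (by norm_num)
      (by have := div_pos hApos hBpos; linarith)
  have h2R2 : (2 : ℝ) ^ R2 = 1 + s := by
    rw [← hR2, rate2, ← hCdef, ← hDdef, hsdef]
    exact Real.rpow_logb (by norm_num) (by norm_num)
      (by have := div_pos hCpos hDpos; linarith)
  set ε : ℝ := min P22 (P12 / t) with hεdef
  have hεpos : 0 < ε := lt_min hP22pos (div_pos hP12pos htpos)
  have hε1 : ε ≤ P22 := min_le_left _ _
  have hε2 : t * ε ≤ P12 := by
    have h := min_le_right P22 (P12 / t)
    rw [← hεdef] at h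
    calc t * ε ≤ t * (P12 / t) := by
          exact mul_le_mul_of_nonneg_left h (le_of_lt htpos)
      _ = P12 := by field_simp
  clear_value ε
  clear_value s
  clear_value t
  clear_value A B C D
  clear hεdef htdef hsdef
  have hts : 1 < t * s := by
    rw [h2R1, h2R2] at hcond
    simpa using hcond
  have htε : 0 ≤ t * ε := le_of_lt (mul_pos htpos hεpos)
  have hQ12nn : 0 ≤ P12 - t * ε := by linarith
  have hQ22nn : 0 ≤ P22 - ε := by linarith
  refine ⟨P12 - t * ε, P22 - ε, by linarith, by linarith,
    ⟨h11, h21, hQ12nn, hQ22nn, hs1, by linarith⟩, ?_, ?_⟩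
  · -- rate1 preserved
    rw [← hR1, rate1, rate1, ← hAdef, ← hBdef]
    have hden : (0:ℝ) < 1 + g11 * P21 + g12 * (P22 - ε) := by positivity
    have e1 : g11 * P11 + g12 * (P12 - t * ε) = A - g12 * (t * ε) := by
      rw [hAdef]; ring
    have e2 : 1 + g11 * P21 + g12 * (P22 - ε) = B - g12 * ε := by
      rw [hBdef]; ring
    rw [e2] at hden
    rw [e1, e2]
    congr 1
    congr 1
    rw [div_eq_div_iff (ne_of_gt hden) (ne_of_gt hBpos)]
    linear_combination (-(g12 * ε)) * htB
  · -- rate2 strictly increases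
    rw [← hR2, rate2, rate2, ← hCdef, ← hDdef]
    have hden : (0:ℝ) < 1 + g21 * P11 + g22 * (P12 - t * ε) := by positivity
    have e1 : g21 * P21 + g22 * (P22 - ε) = C - g22 * ε := by rw [hCdef]; ring
    have e2 : 1 + g21 * P11 + g22 * (P12 - t * ε) = D - g22 * (t * ε) := by
      rw [hDdef]; ring
    rw [e2] at hden
    rw [e1, e2]
    have hCt : D < C * t := by
      have h1 : 0 < (t * s - 1) * D := mul_pos (by linarith) hDpos
      have h2 : t * (s * D) = t * C := by rw [hsD]
      nlinarith [h1, h2]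
    have hlt : C / D < (C - g22 * ε) / (D - g22 * (t * ε)) := by
      rw [div_lt_div_iff₀ hDpos hden]
      have key : 0 < g22 * ε * (C * t - D) :=
        mul_pos (mul_pos hg22 hεpos) (by linarith)
      nlinarith [key]
    apply Real.logb_lt_logb (by norm_num)
    · have := div_pos hCpos hDpos; linarith
    · linarith
end

section
/- Let g11, g12, g21, g22 > 0 and P1, P2 > 0. The maximum over all feasible power allocations of the sum rate R1 + R2 is attained at one of the following four corner allocations (P11, P21, P12, P22): (P1, 0, P2, 0), (0, P1, 0, P2), (0, P1, P2, 0), or (P1, 0, 0, P2). -/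
/-- A concave product of affine functions on `[0,U]` dominates the min of its endpoints. -/
lemma prodmin (a b c e U u : ℝ) (ha : 0 ≤ a) (hb : 0 ≤ b) (h0 : 0 ≤ u) (hU : u ≤ U) :
    min (c * e) ((c + a * U) * (e - b * U)) ≤ (c + a * u) * (e - b * u) := by
  rcases eq_or_lt_of_le (h0.trans hU) with hU0 | hU0
  · have hu0 : u = 0 := le_antisymm (hU.trans hU0.symm.le) h0
    rw [hu0, ← hU0]
    simp
  · have m1 : min (c * e) ((c + a * U) * (e - b * U)) ≤ c * e := min_le_left _ _
    have m2 : min (c * e) ((c + a * U) * (e - b * U)) ≤ (c + a * U) * (e - b * U) :=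
      min_le_right _ _
    have hprod : 0 ≤ a * b * U * u * (U - u) := by
      have h1 : 0 ≤ U - u := by linarith
      positivity
    have h5 : U * (min (c * e) ((c + a * U) * (e - b * U))) ≤
        U * ((c + a * u) * (e - b * u)) := by
      have key : U * ((c + a * u) * (e - b * u)) =
          (U - u) * (c * e) + u * ((c + a * U) * (e - b * U)) + a * b * U * u * (U - u) := by
        ring
      have t1 : (U - u) * (min (c * e) ((c + a * U) * (e - b * U))) ≤ (U - u) * (c * e) :=
        mul_le_mul_of_nonneg_left m1 (by linarith)
      have t2 : u * (min (c * e) ((c + a * U) * (e - b * U))) ≤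
          u * ((c + a * U) * (e - b * U)) := mul_le_mul_of_nonneg_left m2 h0
      nlinarith [t1, t2, hprod]
    exact le_of_mul_le_mul_left h5 hU0

/-- Endpoint lemma: a ratio (affine·affine)/affine on `[0,M]` is bounded by the max
of its endpoint values. -/
lemma endpoint (a b d al be M x : ℝ) (ha : 0 < a) (hb : 0 < b) (hd : 0 < d)
    (hal : 0 < al) (hbe : 0 < be) (hx0 : 0 ≤ x) (hxM : x ≤ M) :
    (al + a * x) * (be + b * x) / (1 + d * x) ≤
      max (al * be) ((al + a * M) * (be + b * M) / (1 + d * M)) := by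
  have hMnn : 0 ≤ M := hx0.trans hxM
  have hlx : 0 < 1 + d * x := by positivity
  have hlM : 0 < 1 + d * M := by positivity
  rcases le_or_gt ((al * d - a) * (be * d - b)) 0 with hr | hr
  · -- increasing case: bounded by the value at M
    refine le_max_of_le_right ?_
    rw [div_le_div_iff₀ hlx hlM]
    have h1 : 0 ≤ (M - x) * (a * b * ((1 + d * M) * (1 + d * x)) -
        (al * d - a) * (be * d - b)) := by
      apply mul_nonneg (by linarith)
      nlinarith [mul_pos (mul_pos ha hb) (mul_pos hlM hlx)]
    have h2 : d * ((al + a * M) * (be + b * M) * (1 + d * x)) -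
        d * ((al + a * x) * (be + b * x) * (1 + d * M)) =
        (M - x) * (a * b * ((1 + d * M) * (1 + d * x)) - (al * d - a) * (be * d - b)) := by
      ring
    have h3 : d * ((al + a * x) * (be + b * x) * (1 + d * M)) ≤
        d * ((al + a * M) * (be + b * M) * (1 + d * x)) := by linarith
    exact le_of_mul_le_mul_left h3 hd
  · -- convex case: bounded by convex combination of endpoints
    rcases eq_or_lt_of_le hMnn with hM0 | hM0
    · have hx0' : x = 0 := le_antisymm (hxM.trans hM0.symm.le) hx0
      rw [hx0']
      refine le_max_of_le_left ?_
      simp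
    · set V := max (al * be) ((al + a * M) * (be + b * M) / (1 + d * M)) with hV
      have hV1 : al * be ≤ V := le_max_left _ _
      have hV2' : (al + a * M) * (be + b * M) ≤ V * (1 + d * M) :=
        (div_le_iff₀ hlM).mp (le_max_right _ _)
      have hid : (M - x) * (al * be) * ((1 + d * x) * (1 + d * M)) +
          x * ((al + a * M) * (be + b * M)) * (1 + d * x) -
          M * ((al + a * x) * (be + b * x)) * (1 + d * M) =
          (al * d - a) * (be * d - b) * x * M * (M - x) := by ring
      have hrpos : 0 ≤ (al * d - a) * (be * d - b) * x * M * (M - x) := by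
        have h1 : 0 ≤ M - x := by linarith
        have h2 : (0:ℝ) ≤ (al * d - a) * (be * d - b) := hr.le
        positivity
      have hmain : M * ((al + a * x) * (be + b * x)) * (1 + d * M) ≤
          (M - x) * (al * be) * ((1 + d * x) * (1 + d * M)) +
          x * ((al + a * M) * (be + b * M)) * (1 + d * x) := by linarith
      have hb1 : (M - x) * (al * be) * ((1 + d * x) * (1 + d * M)) ≤
          (M - x) * V * ((1 + d * x) * (1 + d * M)) := by
        apply mul_le_mul_of_nonneg_right _ (le_of_lt (mul_pos hlx hlM))
        exact mul_le_mul_of_nonneg_left hV1 (by linarith)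
      have hb2 : x * ((al + a * M) * (be + b * M)) * (1 + d * x) ≤
          x * (V * (1 + d * M)) * (1 + d * x) := by
        apply mul_le_mul_of_nonneg_right _ hlx.le
        exact mul_le_mul_of_nonneg_left hV2' hx0
      have hfinal : M * ((al + a * x) * (be + b * x) * (1 + d * M)) ≤
          M * (V * (1 + d * x) * (1 + d * M)) := by nlinarith [hmain, hb1, hb2]
      have h6 : (al + a * x) * (be + b * x) * (1 + d * M) ≤
          V * (1 + d * x) * (1 + d * M) := le_of_mul_le_mul_left hfinal hM0
      have h7 : (al + a * x) * (be + b * x) ≤ V * (1 + d * x) :=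
        le_of_mul_le_mul_right h6 hlM
      exact (div_le_iff₀ hlx).mpr h7

/-- Endpoint lemma packaged with an extra positive constant in the denominator and
an upper bound target. -/
lemma endpoint_bound (a b d al be M x c V : ℝ) (ha : 0 < a) (hb : 0 < b) (hd : 0 < d)
    (hal : 0 < al) (hbe : 0 < be) (hc : 0 < c) (hx0 : 0 ≤ x) (hxM : x ≤ M)
    (h0 : al * be / c ≤ V)
    (hM : (al + a * M) * (be + b * M) / ((1 + d * M) * c) ≤ V) :
    (al + a * x) * (be + b * x) / ((1 + d * x) * c) ≤ V := by
  have hMnn : 0 ≤ M := hx0.trans hxM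
  have hlx : 0 < 1 + d * x := by positivity
  have hlM : 0 < (1:ℝ) + d * M := by positivity
  have h1 := endpoint a b d al be M x ha hb hd hal hbe hx0 hxM
  have h2 : (al + a * x) * (be + b * x) / ((1 + d * x) * c) =
      ((al + a * x) * (be + b * x) / (1 + d * x)) / c := by
    rw [div_div]
  rw [h2]
  rcases max_cases (al * be) ((al + a * M) * (be + b * M) / (1 + d * M)) with
    ⟨hmx, _⟩ | ⟨hmx, _⟩
  · rw [hmx] at h1
    calc (al + a * x) * (be + b * x) / (1 + d * x) / c ≤ al * be / c :=
          div_le_div_of_nonneg_right h1 hc.le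
      _ ≤ V := h0
  · rw [hmx] at h1
    calc (al + a * x) * (be + b * x) / (1 + d * x) / c ≤
          (al + a * M) * (be + b * M) / (1 + d * M) / c :=
          div_le_div_of_nonneg_right h1 hc.le
      _ = (al + a * M) * (be + b * M) / ((1 + d * M) * c) := by rw [div_div]
      _ ≤ V := hM

lemma rate_sum_eq (g11 g12 g21 g22 x1 y1 x2 y2 : ℝ)
    (hg11 : 0 < g11) (hg12 : 0 < g12) (hg21 : 0 < g21) (hg22 : 0 < g22)
    (hx1 : 0 ≤ x1) (hy1 : 0 ≤ y1) (hx2 : 0 ≤ x2) (hy2 : 0 ≤ y2) :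
    rate1 g11 g12 x1 y1 x2 y2 + rate2 g21 g22 x1 y1 x2 y2 =
      Real.logb 2 ((1 + g11 * (x1 + y1) + g12 * (x2 + y2)) *
        (1 + g21 * (x1 + y1) + g22 * (x2 + y2)) /
        ((1 + g11 * y1 + g12 * y2) * (1 + g21 * x1 + g22 * x2))) := by
  have hC : 0 < 1 + g11 * y1 + g12 * y2 := by positivity
  have hE : 0 < 1 + g21 * x1 + g22 * x2 := by positivity
  have hA : 0 < 1 + g11 * (x1 + y1) + g12 * (x2 + y2) := by positivity
  have hB : 0 < 1 + g21 * (x1 + y1) + g22 * (x2 + y2) := by positivity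
  have e1 : 1 + (g11 * x1 + g12 * x2) / (1 + g11 * y1 + g12 * y2) =
      (1 + g11 * (x1 + y1) + g12 * (x2 + y2)) / (1 + g11 * y1 + g12 * y2) := by
    field_simp; ring
  have e2 : 1 + (g21 * y1 + g22 * y2) / (1 + g21 * x1 + g22 * x2) =
      (1 + g21 * (x1 + y1) + g22 * (x2 + y2)) / (1 + g21 * x1 + g22 * x2) := by
    field_simp; ring
  rw [rate1, rate2, e1, e2, ← Real.logb_mul (by positivity) (by positivity),
    div_mul_div_comm]

set_option maxHeartbeats 1000000 in
/-- Core bound: the sum-rate SNR product of any feasible allocation is bounded by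
the max over the four corner allocations. -/
lemma core_bound (g11 g12 g21 g22 P1 P2 : ℝ)
    (hg11 : 0 < g11) (hg12 : 0 < g12) (hg21 : 0 < g21) (hg22 : 0 < g22)
    (hP1 : 0 < P1) (hP2 : 0 < P2)
    (x1 y1 x2 y2 : ℝ) (hf : feasible P1 P2 x1 y1 x2 y2) :
    (1 + g11 * (x1 + y1) + g12 * (x2 + y2)) * (1 + g21 * (x1 + y1) + g22 * (x2 + y2)) /
        ((1 + g11 * y1 + g12 * y2) * (1 + g21 * x1 + g22 * x2)) ≤
      max (max (1 + g11 * P1 + g12 * P2) (1 + g21 * P1 + g22 * P2))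
        (max ((1 + g11 * P1 + g12 * P2) * (1 + g21 * P1 + g22 * P2) /
                ((1 + g11 * P1) * (1 + g22 * P2)))
             ((1 + g11 * P1 + g12 * P2) * (1 + g21 * P1 + g22 * P2) /
                ((1 + g12 * P2) * (1 + g21 * P1)))) := by
  obtain ⟨hx1, hy1, hx2, hy2, hsum1, hsum2⟩ := hf
  set s := x1 + y1 with hs
  set t := x2 + y2 with ht
  have hs0 : 0 ≤ s := by positivity
  have ht0 : 0 ≤ t := by positivity
  have hsP : s ≤ P1 := hsum1
  have htP : t ≤ P2 := hsum2
  set A := 1 + g11 * s + g12 * t with hA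
  set B := 1 + g21 * s + g22 * t with hB
  have hApos : 0 < A := by rw [hA]; positivity
  have hBpos : 0 < B := by rw [hB]; positivity
  set V1 := 1 + g11 * P1 + g12 * P2 with hV1
  set V2 := 1 + g21 * P1 + g22 * P2 with hV2
  set V3 := (1 + g11 * P1 + g12 * P2) * (1 + g21 * P1 + g22 * P2) /
      ((1 + g11 * P1) * (1 + g22 * P2)) with hV3
  set V4 := (1 + g11 * P1 + g12 * P2) * (1 + g21 * P1 + g22 * P2) /
      ((1 + g12 * P2) * (1 + g21 * P1)) with hV4
  set W := max (max V1 V2) (max V3 V4) with hW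
  have hWV1 : V1 ≤ W := le_trans (le_max_left _ _) (le_max_left _ _)
  have hWV2 : V2 ≤ W := le_trans (le_max_right _ _) (le_max_left _ _)
  have hWV3 : V3 ≤ W := le_trans (le_max_left _ _) (le_max_right _ _)
  have hWV4 : V4 ≤ W := le_trans (le_max_right _ _) (le_max_right _ _)
  have hC : 0 < 1 + g11 * y1 + g12 * y2 := by positivity
  have hE : 0 < 1 + g21 * x1 + g22 * x2 := by positivity
  -- Step 1: lower bound on the denominator: slice in y1
  have step1 : min ((1 + g12 * y2) * (1 + g21 * s + g22 * (t - y2)))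
        ((1 + g12 * y2 + g11 * s) * (1 + g22 * (t - y2))) ≤
      (1 + g11 * y1 + g12 * y2) * (1 + g21 * x1 + g22 * x2) := by
    have h := prodmin g11 g21 (1 + g12 * y2) (1 + g21 * s + g22 * (t - y2)) s y1
      hg11.le hg21.le hy1 (by rw [hs]; linarith)
    have e1 : (1 + g12 * y2 + g11 * y1) * (1 + g21 * s + g22 * (t - y2) - g21 * y1) =
        (1 + g11 * y1 + g12 * y2) * (1 + g21 * x1 + g22 * x2) := by
      rw [hs, ht]; ring
    have e2 : (1 + g12 * y2 + g11 * s) * (1 + g21 * s + g22 * (t - y2) - g21 * s) =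
        (1 + g12 * y2 + g11 * s) * (1 + g22 * (t - y2)) := by ring
    rw [e2, e1] at h
    exact h
  -- slice in y2 for the first branch
  have step2a : min (1 * B) ((1 + g12 * t) * (1 + g21 * s)) ≤
      (1 + g12 * y2) * (1 + g21 * s + g22 * (t - y2)) := by
    have h := prodmin g12 g22 1 (1 + g21 * s + g22 * t) t y2 hg12.le hg22.le hy2
      (by rw [ht]; linarith)
    have e1 : (1 + g12 * y2) * (1 + g21 * s + g22 * t - g22 * y2) =
        (1 + g12 * y2) * (1 + g21 * s + g22 * (t - y2)) := by ring
    have e2 : (1 + g12 * t) * (1 + g21 * s + g22 * t - g22 * t) =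
        (1 + g12 * t) * (1 + g21 * s) := by ring
    have e3 : 1 * (1 + g21 * s + g22 * t) = 1 * B := by rw [hB]
    rw [e1, e2, e3] at h
    exact h
  -- slice in y2 for the second branch
  have step2b : min ((1 + g11 * s) * (1 + g22 * t)) (A * 1) ≤
      (1 + g12 * y2 + g11 * s) * (1 + g22 * (t - y2)) := by
    have h := prodmin g12 g22 (1 + g11 * s) (1 + g22 * t) t y2 hg12.le hg22.le hy2
      (by rw [ht]; linarith)
    have e1 : (1 + g11 * s + g12 * y2) * (1 + g22 * t - g22 * y2) =
        (1 + g12 * y2 + g11 * s) * (1 + g22 * (t - y2)) := by ring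
    have e2 : (1 + g11 * s + g12 * t) * (1 + g22 * t - g22 * t) = A * 1 := by
      rw [hA]; ring
    rw [e1, e2] at h
    exact h
  have hmCE : min (min (1 * B) ((1 + g12 * t) * (1 + g21 * s)))
        (min ((1 + g11 * s) * (1 + g22 * t)) (A * 1)) ≤
      (1 + g11 * y1 + g12 * y2) * (1 + g21 * x1 + g22 * x2) :=
    (min_le_min step2a step2b).trans step1
  have hstep : A * B / ((1 + g11 * y1 + g12 * y2) * (1 + g21 * x1 + g22 * x2)) ≤
      A * B / (min (min (1 * B) ((1 + g12 * t) * (1 + g21 * s)))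
        (min ((1 + g11 * s) * (1 + g22 * t)) (A * 1))) := by
    apply div_le_div_of_nonneg_left (by positivity) _ hmCE
    apply lt_min
    · apply lt_min
      · rw [one_mul]; exact hBpos
      · positivity
    · apply lt_min
      · positivity
      · rw [mul_one]; exact hApos
  -- Bounds for the two pure corners at totals (s,t)
  have hAV1 : A ≤ V1 := by
    rw [hA, hV1]
    have := mul_le_mul_of_nonneg_left hsP hg11.le
    have := mul_le_mul_of_nonneg_left htP hg12.le
    linarith
  have hBV2 : B ≤ V2 := by
    rw [hB, hV2]
    have := mul_le_mul_of_nonneg_left hsP hg21.le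
    have := mul_le_mul_of_nonneg_left htP hg22.le
    linarith
  -- Bound for the mixed corner (0,s,t,0)
  have bound3 : A * B / ((1 + g11 * s) * (1 + g22 * t)) ≤ W := by
    have eq1 : A * B / ((1 + g11 * s) * (1 + g22 * t)) =
        ((1 + g12 * t) + g11 * s) * ((1 + g22 * t) + g21 * s) /
          ((1 + g11 * s) * (1 + g22 * t)) := by rw [hA, hB]; ring
    rw [eq1]
    apply endpoint_bound g11 g21 g11 (1 + g12 * t) (1 + g22 * t) P1 s (1 + g22 * t) W
      hg11 hg21 hg11 (by positivity) (by positivity) (by positivity) hs0 hsP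
    · -- value at s = 0 : 1 + g12*t ≤ V1 ≤ W
      have h1 : (1 + g12 * t) * (1 + g22 * t) / (1 + g22 * t) = 1 + g12 * t := by
        rw [mul_div_assoc, div_self (by positivity), mul_one]
      rw [h1]
      refine le_trans ?_ hWV1
      rw [hV1]
      have := mul_le_mul_of_nonneg_left htP hg12.le
      linarith [mul_pos hg11 hP1]
    · -- value at s = P1 : another endpoint application in t
      have eq2 : ((1 + g12 * t) + g11 * P1) * ((1 + g22 * t) + g21 * P1) /
          ((1 + g11 * P1) * (1 + g22 * t)) =
          ((1 + g11 * P1) + g12 * t) * ((1 + g21 * P1) + g22 * t) /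
            ((1 + g22 * t) * (1 + g11 * P1)) := by ring
      rw [eq2]
      apply endpoint_bound g12 g22 g22 (1 + g11 * P1) (1 + g21 * P1) P2 t (1 + g11 * P1) W
        hg12 hg22 hg22 (by positivity) (by positivity) (by positivity) ht0 htP
      · have h1 : (1 + g11 * P1) * (1 + g21 * P1) / (1 + g11 * P1) = 1 + g21 * P1 := by
          rw [mul_comm, mul_div_assoc, div_self (by positivity), mul_one]
        rw [h1]
        refine le_trans ?_ hWV2
        rw [hV2]
        linarith [mul_pos hg22 hP2]
      · refine le_trans (le_of_eq ?_) hWV3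
        rw [hV3, div_eq_div_iff (by positivity) (by positivity)]
        ring
  -- Bound for the mixed corner (s,0,0,t)
  have bound4 : A * B / ((1 + g12 * t) * (1 + g21 * s)) ≤ W := by
    have eq1 : A * B / ((1 + g12 * t) * (1 + g21 * s)) =
        ((1 + g11 * s) + g12 * t) * ((1 + g21 * s) + g22 * t) /
          ((1 + g12 * t) * (1 + g21 * s)) := by rw [hA, hB]
    rw [eq1]
    apply endpoint_bound g12 g22 g12 (1 + g11 * s) (1 + g21 * s) P2 t (1 + g21 * s) W
      hg12 hg22 hg12 (by positivity) (by positivity) (by positivity) ht0 htP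
    · have h1 : (1 + g11 * s) * (1 + g21 * s) / (1 + g21 * s) = 1 + g11 * s := by
        rw [mul_div_assoc, div_self (by positivity), mul_one]
      rw [h1]
      refine le_trans ?_ hWV1
      rw [hV1]
      have := mul_le_mul_of_nonneg_left hsP hg11.le
      linarith [mul_pos hg12 hP2]
    · have eq2 : ((1 + g11 * s) + g12 * P2) * ((1 + g21 * s) + g22 * P2) /
          ((1 + g12 * P2) * (1 + g21 * s)) =
          ((1 + g12 * P2) + g11 * s) * ((1 + g22 * P2) + g21 * s) /
            ((1 + g21 * s) * (1 + g12 * P2)) := by ring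
      rw [eq2]
      apply endpoint_bound g11 g21 g21 (1 + g12 * P2) (1 + g22 * P2) P1 s (1 + g12 * P2) W
        hg11 hg21 hg21 (by positivity) (by positivity) (by positivity) hs0 hsP
      · have h1 : (1 + g12 * P2) * (1 + g22 * P2) / (1 + g12 * P2) = 1 + g22 * P2 := by
          rw [mul_comm, mul_div_assoc, div_self (by positivity), mul_one]
        rw [h1]
        refine le_trans ?_ hWV2
        rw [hV2]
        linarith [mul_pos hg21 hP1]
      · refine le_trans (le_of_eq ?_) hWV4
        rw [hV4, div_eq_div_iff (by positivity) (by positivity)]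
        ring
  -- combine: case analysis on which corner realizes the min
  refine hstep.trans ?_
  rcases min_cases (min (1 * B) ((1 + g12 * t) * (1 + g21 * s)))
      (min ((1 + g11 * s) * (1 + g22 * t)) (A * 1)) with ⟨hmn, _⟩ | ⟨hmn, _⟩ <;>
    rw [hmn]
  · rcases min_cases (1 * B) ((1 + g12 * t) * (1 + g21 * s)) with ⟨hmn2, _⟩ | ⟨hmn2, _⟩ <;>
      rw [hmn2]
    · have h1 : A * B / (1 * B) = A := by
        rw [one_mul, mul_div_assoc, div_self hBpos.ne', mul_one]
      rw [h1]
      exact hAV1.trans hWV1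
    · exact bound4
  · rcases min_cases ((1 + g11 * s) * (1 + g22 * t)) (A * 1) with ⟨hmn2, _⟩ | ⟨hmn2, _⟩ <;>
      rw [hmn2]
    · exact bound3
    · have h1 : A * B / (A * 1) = B := by
        rw [mul_one, mul_comm, mul_div_assoc, div_self hApos.ne', mul_one]
      rw [h1]
      exact hBV2.trans hWV2

set_option maxHeartbeats 1000000 in
theorem sum_rate_max_at_corner
    (g11 g12 g21 g22 P1 P2 : ℝ)
    (hg11 : 0 < g11) (hg12 : 0 < g12) (hg21 : 0 < g21) (hg22 : 0 < g22)
    (hP1 : 0 < P1) (hP2 : 0 < P2) :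
    ∃ Q11 Q21 Q12 Q22 : ℝ,
      ((Q11, Q21, Q12, Q22) = (P1, 0, P2, 0) ∨
       (Q11, Q21, Q12, Q22) = (0, P1, 0, P2) ∨
       (Q11, Q21, Q12, Q22) = (0, P1, P2, 0) ∨
       (Q11, Q21, Q12, Q22) = (P1, 0, 0, P2)) ∧
      feasible P1 P2 Q11 Q21 Q12 Q22 ∧
      ∀ P11 P21 P12 P22, feasible P1 P2 P11 P21 P12 P22 →
        rate1 g11 g12 P11 P21 P12 P22 + rate2 g21 g22 P11 P21 P12 P22 ≤
          rate1 g11 g12 Q11 Q21 Q12 Q22 + rate2 g21 g22 Q11 Q21 Q12 Q22 := by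
  set V1 := 1 + g11 * P1 + g12 * P2 with hV1
  set V2 := 1 + g21 * P1 + g22 * P2 with hV2
  set V3 := (1 + g11 * P1 + g12 * P2) * (1 + g21 * P1 + g22 * P2) /
      ((1 + g11 * P1) * (1 + g22 * P2)) with hV3
  set V4 := (1 + g11 * P1 + g12 * P2) * (1 + g21 * P1 + g22 * P2) /
      ((1 + g12 * P2) * (1 + g21 * P1)) with hV4
  set W := max (max V1 V2) (max V3 V4) with hW
  -- the generic upper bound, phrased via logb
  have main : ∀ x1 y1 x2 y2, feasible P1 P2 x1 y1 x2 y2 →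
      rate1 g11 g12 x1 y1 x2 y2 + rate2 g21 g22 x1 y1 x2 y2 ≤ Real.logb 2 W := by
    intro x1 y1 x2 y2 hf
    obtain ⟨hx1, hy1, hx2, hy2, _, _⟩ := hf
    rw [rate_sum_eq g11 g12 g21 g22 x1 y1 x2 y2 hg11 hg12 hg21 hg22 hx1 hy1 hx2 hy2]
    have hpos : 0 < (1 + g11 * (x1 + y1) + g12 * (x2 + y2)) *
        (1 + g21 * (x1 + y1) + g22 * (x2 + y2)) /
        ((1 + g11 * y1 + g12 * y2) * (1 + g21 * x1 + g22 * x2)) := by positivity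
    exact Real.logb_le_logb_of_le one_lt_two hpos
      (core_bound g11 g12 g21 g22 P1 P2 hg11 hg12 hg21 hg22 hP1 hP2 x1 y1 x2 y2
        ⟨hx1, hy1, hx2, hy2, ‹_›, ‹_›⟩)
  -- rate sums at the four corners
  have hc1 : rate1 g11 g12 P1 0 P2 0 + rate2 g21 g22 P1 0 P2 0 = Real.logb 2 V1 := by
    rw [rate_sum_eq g11 g12 g21 g22 P1 0 P2 0 hg11 hg12 hg21 hg22 hP1.le le_rfl hP2.le le_rfl]
    congr 1
    rw [hV1, div_eq_iff (by positivity)]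
    ring
  have hc2 : rate1 g11 g12 0 P1 0 P2 + rate2 g21 g22 0 P1 0 P2 = Real.logb 2 V2 := by
    rw [rate_sum_eq g11 g12 g21 g22 0 P1 0 P2 hg11 hg12 hg21 hg22 le_rfl hP1.le le_rfl hP2.le]
    congr 1
    rw [hV2, div_eq_iff (by positivity)]
    ring
  have hc3 : rate1 g11 g12 0 P1 P2 0 + rate2 g21 g22 0 P1 P2 0 = Real.logb 2 V3 := by
    rw [rate_sum_eq g11 g12 g21 g22 0 P1 P2 0 hg11 hg12 hg21 hg22 le_rfl hP1.le hP2.le le_rfl]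
    congr 1
    rw [hV3, div_eq_div_iff (by positivity) (by positivity)]
    ring
  have hc4 : rate1 g11 g12 P1 0 0 P2 + rate2 g21 g22 P1 0 0 P2 = Real.logb 2 V4 := by
    rw [rate_sum_eq g11 g12 g21 g22 P1 0 0 P2 hg11 hg12 hg21 hg22 hP1.le le_rfl le_rfl hP2.le]
    congr 1
    rw [hV4, div_eq_div_iff (by positivity) (by positivity)]
    ring
  have hfe1 : feasible P1 P2 P1 0 P2 0 :=
    ⟨hP1.le, le_rfl, hP2.le, le_rfl, by linarith, by linarith⟩
  have hfe2 : feasible P1 P2 0 P1 0 P2 :=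
    ⟨le_rfl, hP1.le, le_rfl, hP2.le, by linarith, by linarith⟩
  have hfe3 : feasible P1 P2 0 P1 P2 0 :=
    ⟨le_rfl, hP1.le, hP2.le, le_rfl, by linarith, by linarith⟩
  have hfe4 : feasible P1 P2 P1 0 0 P2 :=
    ⟨hP1.le, le_rfl, le_rfl, hP2.le, by linarith, by linarith⟩
  rcases max_cases (max V1 V2) (max V3 V4) with ⟨hm1, _⟩ | ⟨hm1, _⟩
  · rcases max_cases V1 V2 with ⟨hm2, _⟩ | ⟨hm2, _⟩
    · refine ⟨P1, 0, P2, 0, Or.inl rfl, hfe1, ?_⟩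
      intro p11 p21 p12 p22 hf
      rw [hc1]
      refine (main p11 p21 p12 p22 hf).trans (le_of_eq ?_)
      rw [hW, hm1, hm2]
    · refine ⟨0, P1, 0, P2, Or.inr (Or.inl rfl), hfe2, ?_⟩
      intro p11 p21 p12 p22 hf
      rw [hc2]
      refine (main p11 p21 p12 p22 hf).trans (le_of_eq ?_)
      rw [hW, hm1, hm2]
  · rcases max_cases V3 V4 with ⟨hm2, _⟩ | ⟨hm2, _⟩
    · refine ⟨0, P1, P2, 0, Or.inr (Or.inr (Or.inl rfl)), hfe3, ?_⟩
      intro p11 p21 p12 p22 hf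
      rw [hc3]
      refine (main p11 p21 p12 p22 hf).trans (le_of_eq ?_)
      rw [hW, hm1, hm2]
    · refine ⟨P1, 0, 0, P2, Or.inr (Or.inr (Or.inr rfl)), hfe4, ?_⟩
      intro p11 p21 p12 p22 hf
      rw [hc4]
      refine (main p11 p21 p12 p22 hf).trans (le_of_eq ?_)
      rw [hW, hm1, hm2]
end

section
/- Let g11, g12, g21, g22 > 0, P1, P2 > 0, and let μ ≥ 0 with μ ≠ 1. Then the maximum over all feasible power allocations of the weighted sum rate R1 + μ·R2 is attained by a feasible allocation (P11, P21, P12, P22) satisfying P11·P21 = 0 and P12·P22 = 0. -/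
open Real Set

lemma neg_logb_affine_convexOn (a b : ℝ) (s : Set ℝ) (hs : Convex ℝ s)
    (hpos : ∀ x ∈ s, 0 < a + b * x) :
    ConvexOn ℝ s (fun x => -Real.logb 2 (a + b * x)) := by
  have hneg : ConvexOn ℝ (Ioi (0:ℝ)) (fun t => -Real.log t) :=
    strictConcaveOn_log_Ioi.neg.convexOn
  set g : ℝ →ᵃ[ℝ] ℝ := AffineMap.lineMap a (a + b) with hg
  have hgx : ∀ x : ℝ, g x = a + b * x := by
    intro x
    simp [hg, AffineMap.lineMap_apply_ring']
    ring
  have hcomp : ConvexOn ℝ (g ⁻¹' Ioi (0:ℝ)) ((fun t => -Real.log t) ∘ g) :=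
    hneg.comp_affineMap g
  have hsub : s ⊆ g ⁻¹' Ioi (0:ℝ) := by
    intro x hx
    simp only [Set.mem_preimage, Set.mem_Ioi, hgx]
    exact hpos x hx
  have h1 : ConvexOn ℝ s ((fun t => -Real.log t) ∘ g) := hcomp.subset hsub hs
  have h2 : ConvexOn ℝ s (fun x => (Real.log 2)⁻¹ • ((fun t => -Real.log t) ∘ g) x) :=
    h1.smul (by positivity)
  refine h2.congr fun x hx => ?_
  simp only [Function.comp_apply, hgx, smul_eq_mul, Real.logb]
  ring

/-- One-sided move: the first power pair can be moved to a vertex without decreasing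
the weighted sum rate, keeping the second pair fixed. -/
lemma move1 (g11 g12 g21 g22 P1 P2 μ : ℝ)
    (hg11 : 0 < g11) (hg12 : 0 < g12) (hg21 : 0 < g21) (hg22 : 0 < g22)
    (hμ : 0 ≤ μ)
    (P11 P21 P12 P22 : ℝ) (hf : feasible P1 P2 P11 P21 P12 P22) :
    ∃ Q11 Q21, feasible P1 P2 Q11 Q21 P12 P22 ∧ Q11 * Q21 = 0 ∧
      rate1 g11 g12 P11 P21 P12 P22 + μ * rate2 g21 g22 P11 P21 P12 P22 ≤
      rate1 g11 g12 Q11 Q21 P12 P22 + μ * rate2 g21 g22 Q11 Q21 P12 P22 := by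
  obtain ⟨h11, h21, h12, h22, hs1, hs2⟩ := hf
  set S : ℝ := P11 + P21 with hS
  have hS0 : 0 ≤ S := by positivity
  set f : ℝ → ℝ := fun x =>
    rate1 g11 g12 (S - x) x P12 P22 + μ * rate2 g21 g22 (S - x) x P12 P22 with hfdef
  -- the two affine denominators
  set a1 : ℝ := 1 + g12 * P22 with ha1
  set a2 : ℝ := 1 + g21 * S + g22 * P12 with ha2
  have ha1pos : ∀ x ∈ Icc (0:ℝ) S, 0 < a1 + g11 * x := by
    intro x hx
    have := hx.1
    nlinarith [hg12.le, h22]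
  have ha2pos : ∀ x ∈ Icc (0:ℝ) S, 0 < a2 + (-g21) * x := by
    intro x hx
    have := hx.2
    nlinarith [hg22.le, h12]
  -- constant part
  set C : ℝ := Real.logb 2 (1 + g11 * S + g12 * (P12 + P22))
      + μ * Real.logb 2 (1 + g21 * S + g22 * (P12 + P22)) with hC
  -- pointwise formula for f on Icc 0 S
  have hfx : ∀ x ∈ Icc (0:ℝ) S,
      f x = C + (-Real.logb 2 (a1 + g11 * x)) + μ • (-Real.logb 2 (a2 + (-g21) * x)) := by
    intro x hx
    have hd1 : (0:ℝ) < 1 + g11 * x + g12 * P22 := by nlinarith [hx.1, hg11.le, hg12.le, h22]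
    have hd2 : (0:ℝ) < 1 + g21 * (S - x) + g22 * P12 := by
      nlinarith [hx.2, hg21.le, hg22.le, h12]
    have hn1 : (0:ℝ) < 1 + g11 * S + g12 * (P12 + P22) := by nlinarith [hg11.le, hg12.le, h12, h22]
    have hn2 : (0:ℝ) < 1 + g21 * S + g22 * (P12 + P22) := by nlinarith [hg21.le, hg22.le, h12, h22]
    have e1 : rate1 g11 g12 (S - x) x P12 P22
        = Real.logb 2 (1 + g11 * S + g12 * (P12 + P22)) - Real.logb 2 (a1 + g11 * x) := by
      have hne1 : a1 + g11 * x ≠ 0 := (ha1pos x hx).ne'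
      rw [rate1, show (1:ℝ) + (g11 * (S - x) + g12 * P12) / (1 + g11 * x + g12 * P22)
          = (1 + g11 * S + g12 * (P12 + P22)) / (a1 + g11 * x) by
        rw [show (1:ℝ) + g11 * x + g12 * P22 = a1 + g11 * x by rw [ha1]; ring]
        rw [eq_div_iff hne1, add_mul, div_mul_cancel₀ _ hne1, ha1, hS]; ring]
      exact Real.logb_div hn1.ne' hne1
    have e2 : rate2 g21 g22 (S - x) x P12 P22
        = Real.logb 2 (1 + g21 * S + g22 * (P12 + P22)) - Real.logb 2 (a2 + (-g21) * x) := by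
      rw [rate2, show (1:ℝ) + (g21 * x + g22 * P22) / (1 + g21 * (S - x) + g22 * P12)
          = (1 + g21 * S + g22 * (P12 + P22)) / (a2 + (-g21) * x) by
        have h2e : (1:ℝ) + g21 * (S - x) + g22 * P12 = a2 + (-g21) * x := by rw [ha2]; ring
        have hne2 : a2 + (-g21) * x ≠ 0 := (ha2pos x hx).ne'
        rw [h2e, eq_div_iff hne2, add_mul, div_mul_cancel₀ _ hne2, ha2]; ring]
      exact Real.logb_div hn2.ne' (ha2pos x hx).ne'
    rw [hfdef]
    simp only [e1, e2, hC, smul_eq_mul]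
    ring
  -- convexity of f on Icc 0 S
  have hconv : ConvexOn ℝ (Icc (0:ℝ) S) f := by
    have h1 := neg_logb_affine_convexOn a1 g11 _ (convex_Icc 0 S) ha1pos
    have h2 := neg_logb_affine_convexOn a2 (-g21) _ (convex_Icc 0 S) ha2pos
    have := ((convexOn_const C (convex_Icc (0:ℝ) S)).add h1).add (h2.smul hμ)
    exact this.congr fun x hx => (hfx x hx).symm
  -- max over segment is at an endpoint
  have hmem : P21 ∈ Icc (0:ℝ) S := ⟨h21, by simp [hS]; linarith⟩
  have hle : f P21 ≤ max (f 0) (f S) :=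
    hconv.le_on_segment (left_mem_Icc.2 hS0) (right_mem_Icc.2 hS0)
      (by rwa [segment_eq_Icc hS0])
  have hfP : rate1 g11 g12 P11 P21 P12 P22 + μ * rate2 g21 g22 P11 P21 P12 P22 = f P21 := by
    rw [hfdef]
    simp only [show S - P21 = P11 by rw [hS]; ring]
  rcases le_max_iff.mp hle with h | h
  · refine ⟨S, 0, ⟨hS0, le_refl 0, h12, h22, by simp [hS]; linarith, hs2⟩, by ring, ?_⟩
    rw [hfP]
    simpa [hfdef] using h
  · refine ⟨0, S, ⟨le_refl 0, hS0, h12, h22, by simp [hS]; linarith, hs2⟩, by ring, ?_⟩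
    rw [hfP]
    simpa [hfdef] using h

lemma rate1_swap (g11 g12 P11 P21 P12 P22 : ℝ) :
    rate1 g11 g12 P11 P21 P12 P22 = rate1 g12 g11 P12 P22 P11 P21 := by
  rw [rate1, rate1]; ring_nf

lemma rate2_swap (g21 g22 P11 P21 P12 P22 : ℝ) :
    rate2 g21 g22 P11 P21 P12 P22 = rate2 g22 g21 P12 P22 P11 P21 := by
  rw [rate2, rate2]; ring_nf

lemma feasible_swap {P1 P2 P11 P21 P12 P22 : ℝ} (h : feasible P1 P2 P11 P21 P12 P22) :
    feasible P2 P1 P12 P22 P11 P21 := by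
  obtain ⟨a, b, c, d, e, f⟩ := h; exact ⟨c, d, a, b, f, e⟩

/-- One-sided move for the second pair. -/
lemma move2 (g11 g12 g21 g22 P1 P2 μ : ℝ)
    (hg11 : 0 < g11) (hg12 : 0 < g12) (hg21 : 0 < g21) (hg22 : 0 < g22)
    (hμ : 0 ≤ μ)
    (P11 P21 P12 P22 : ℝ) (hf : feasible P1 P2 P11 P21 P12 P22) :
    ∃ Q12 Q22, feasible P1 P2 P11 P21 Q12 Q22 ∧ Q12 * Q22 = 0 ∧
      rate1 g11 g12 P11 P21 P12 P22 + μ * rate2 g21 g22 P11 P21 P12 P22 ≤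
      rate1 g11 g12 P11 P21 Q12 Q22 + μ * rate2 g21 g22 P11 P21 Q12 Q22 := by
  obtain ⟨Q12, Q22, hfe, hpr, hle⟩ :=
    move1 g12 g11 g22 g21 P2 P1 μ hg12 hg11 hg22 hg21 hμ P12 P22 P11 P21 (feasible_swap hf)
  refine ⟨Q12, Q22, feasible_swap hfe, hpr, ?_⟩
  rw [rate1_swap g11 g12 P11 P21 P12 P22, rate2_swap g21 g22 P11 P21 P12 P22,
    rate1_swap g11 g12 P11 P21 Q12 Q22, rate2_swap g21 g22 P11 P21 Q12 Q22]
  exact hle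

theorem weighted_sum_rate_max_single_message
    (g11 g12 g21 g22 P1 P2 μ : ℝ)
    (hg11 : 0 < g11) (hg12 : 0 < g12) (hg21 : 0 < g21) (hg22 : 0 < g22)
    (hP1 : 0 < P1) (hP2 : 0 < P2)
    (hμ : 0 ≤ μ) (hμne : μ ≠ 1) :
    ∃ Q11 Q21 Q12 Q22 : ℝ,
      feasible P1 P2 Q11 Q21 Q12 Q22 ∧
      Q11 * Q21 = 0 ∧ Q12 * Q22 = 0 ∧
      ∀ P11 P21 P12 P22, feasible P1 P2 P11 P21 P12 P22 →
        rate1 g11 g12 P11 P21 P12 P22 + μ * rate2 g21 g22 P11 P21 P12 P22 ≤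
          rate1 g11 g12 Q11 Q21 Q12 Q22 + μ * rate2 g21 g22 Q11 Q21 Q12 Q22 := by
  set G : ℝ × ℝ × ℝ × ℝ → ℝ := fun p =>
    rate1 g11 g12 p.1 p.2.1 p.2.2.1 p.2.2.2 + μ * rate2 g21 g22 p.1 p.2.1 p.2.2.1 p.2.2.2
    with hG
  set K : Set (ℝ × ℝ × ℝ × ℝ) := {p | feasible P1 P2 p.1 p.2.1 p.2.2.1 p.2.2.2} with hK
  have hKclosed : IsClosed K := by
    have : K = {p : ℝ × ℝ × ℝ × ℝ | 0 ≤ p.1} ∩ {p | 0 ≤ p.2.1} ∩ {p | 0 ≤ p.2.2.1} ∩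
        {p | 0 ≤ p.2.2.2} ∩ {p | p.1 + p.2.1 ≤ P1} ∩ {p | p.2.2.1 + p.2.2.2 ≤ P2} := by
      ext p
      simp [hK, feasible, Set.mem_inter_iff, and_assoc]
    rw [this]
    exact ((((((isClosed_le (by fun_prop) (by fun_prop)).inter
      (isClosed_le (by fun_prop) (by fun_prop))).inter
      (isClosed_le (by fun_prop) (by fun_prop))).inter
      (isClosed_le (by fun_prop) (by fun_prop))).inter
      (isClosed_le (by fun_prop) (by fun_prop))).inter
      (isClosed_le (by fun_prop) (by fun_prop)))
  have hKsub : K ⊆ Icc ((0:ℝ), (0:ℝ), (0:ℝ), (0:ℝ)) (P1, P1, P2, P2) := by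
    rintro p ⟨h11, h21, h12, h22, hs1, hs2⟩
    simp only [Set.mem_Icc, Prod.le_def]
    exact ⟨⟨h11, h21, h12, h22⟩, by linarith, by linarith, by linarith, by linarith⟩
  have hKcompact : IsCompact K := (isCompact_Icc).of_isClosed_subset hKclosed hKsub
  have hKne : K.Nonempty := by
    refine ⟨(0, 0, 0, 0), ?_⟩
    exact ⟨le_rfl, le_rfl, le_rfl, le_rfl, by simpa using hP1.le, by simpa using hP2.le⟩
  have hcont : ContinuousOn G K := by
    rintro p ⟨h11, h21, h12, h22, hs1, hs2⟩
    apply ContinuousAt.continuousWithinAt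
    have hd1 : (0:ℝ) < 1 + g11 * p.2.1 + g12 * p.2.2.2 := by nlinarith [hg11.le, hg12.le]
    have hd2 : (0:ℝ) < 1 + g21 * p.1 + g22 * p.2.2.1 := by nlinarith [hg21.le, hg22.le]
    have ha1 : (0:ℝ) <
        1 + (g11 * p.1 + g12 * p.2.2.1) / (1 + g11 * p.2.1 + g12 * p.2.2.2) := by
      have := div_nonneg (by nlinarith [hg11.le, hg12.le] :
        (0:ℝ) ≤ g11 * p.1 + g12 * p.2.2.1) hd1.le
      linarith
    have ha2 : (0:ℝ) <
        1 + (g21 * p.2.1 + g22 * p.2.2.2) / (1 + g21 * p.1 + g22 * p.2.2.1) := by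
      have := div_nonneg (by nlinarith [hg21.le, hg22.le] :
        (0:ℝ) ≤ g21 * p.2.1 + g22 * p.2.2.2) hd2.le
      linarith
    have hn1c : ContinuousAt (fun x : ℝ × ℝ × ℝ × ℝ => g11 * x.1 + g12 * x.2.2.1) p := by
      fun_prop
    have hd1c : ContinuousAt (fun x : ℝ × ℝ × ℝ × ℝ => 1 + g11 * x.2.1 + g12 * x.2.2.2) p := by
      fun_prop
    have hn2c : ContinuousAt (fun x : ℝ × ℝ × ℝ × ℝ => g21 * x.2.1 + g22 * x.2.2.2) p := by
      fun_prop
    have hd2c : ContinuousAt (fun x : ℝ × ℝ × ℝ × ℝ => 1 + g21 * x.1 + g22 * x.2.2.1) p := by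
      fun_prop
    rw [hG]
    simp only [rate1, rate2, Real.logb]
    apply ContinuousAt.add
    · apply ContinuousAt.div_const
      exact (continuousAt_const.add (hn1c.div hd1c hd1.ne')).log ha1.ne'
    · apply ContinuousAt.mul continuousAt_const
      apply ContinuousAt.div_const
      exact (continuousAt_const.add (hn2c.div hd2c hd2.ne')).log ha2.ne'
  obtain ⟨q, hqK, hqmax⟩ := hKcompact.exists_isMaxOn hKne hcont
  obtain ⟨Q11, Q21, hfe1, hpr1, hle1⟩ :=
    move1 g11 g12 g21 g22 P1 P2 μ hg11 hg12 hg21 hg22 hμ q.1 q.2.1 q.2.2.1 q.2.2.2 hqK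
  obtain ⟨Q12, Q22, hfe2, hpr2, hle2⟩ :=
    move2 g11 g12 g21 g22 P1 P2 μ hg11 hg12 hg21 hg22 hμ Q11 Q21 q.2.2.1 q.2.2.2 hfe1
  refine ⟨Q11, Q21, Q12, Q22, hfe2, hpr1, hpr2, ?_⟩
  intro P11 P21 P12 P22 hP
  have h0 : rate1 g11 g12 P11 P21 P12 P22 + μ * rate2 g21 g22 P11 P21 P12 P22 ≤
      rate1 g11 g12 q.1 q.2.1 q.2.2.1 q.2.2.2 + μ * rate2 g21 g22 q.1 q.2.1 q.2.2.1 q.2.2.2 :=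
    hqmax (show (P11, P21, P12, P22) ∈ K from hP)
  linarith
end

section
/- Let g11, g12, g21, g22 > 0, P1, P2 > 0 and μ ≥ 0. Define f(P11) = log2(1 + g11·P11/(1 + g12·P2)) + μ·log2(1 + g22·P2/(1 + g21·P11)) for P11 ≥ 0. Then every stationary point of f (i.e., every P11 ≥ 0 with f'(P11) = 0) satisfies the quadratic equation a1·P11² + b1·P11 + c1 = 0, where a1 = g11·g21², b1 = 2·g11·g21 + (1 − μ)·g11·g21·g22·P2, and c1 = g11·(1 + g22·P2) − μ·g21·g22·P2·(1 + g12·P2). -/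
theorem stationary_point_satisfies_quadratic
    (g11 g12 g21 g22 P1 P2 μ : ℝ)
    (hg11 : 0 < g11) (hg12 : 0 < g12) (hg21 : 0 < g21) (hg22 : 0 < g22)
    (hP1 : 0 < P1) (hP2 : 0 < P2) (hμ : 0 ≤ μ)
    (f : ℝ → ℝ)
    (hf : f = fun P11 => Real.logb 2 (1 + g11 * P11 / (1 + g12 * P2)) +
      μ * Real.logb 2 (1 + g22 * P2 / (1 + g21 * P11)))
    (P11 : ℝ) (hP11 : 0 ≤ P11) (hstat : deriv f P11 = 0) :
    g11 * g21 ^ 2 * P11 ^ 2 +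
      (2 * g11 * g21 + (1 - μ) * g11 * g21 * g22 * P2) * P11 +
      (g11 * (1 + g22 * P2) - μ * g21 * g22 * P2 * (1 + g12 * P2)) = 0 := by
  set A : ℝ := 1 + g12 * P2 with hAdef
  have hA : 0 < A := by positivity
  have hlog2 : Real.log 2 ≠ 0 := ne_of_gt (Real.log_pos (by norm_num))
  set g : ℝ → ℝ := fun x => (Real.log (A + g11 * x) - Real.log A +
      μ * (Real.log (1 + g21 * x + g22 * P2) - Real.log (1 + g21 * x))) / Real.log 2 with hgdef
  set δ : ℝ := min (A / g11) (1 / g21) with hδdef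
  have hδ : 0 < δ := lt_min (by positivity) (by positivity)
  have heq : f =ᶠ[nhds P11] g := by
    have hmem : Set.Ioi (-δ) ∈ nhds P11 :=
      isOpen_Ioi.mem_nhds (by simp only [Set.mem_Ioi]; linarith)
    filter_upwards [hmem] with x hx
    simp only [Set.mem_Ioi] at hx
    have hu : 0 < A + g11 * x := by
      have h1 : -A / g11 < x := by
        rw [neg_div]
        exact lt_of_le_of_lt (neg_le_neg (min_le_left _ _)) hx
      have := (div_lt_iff₀ hg11).mp h1
      linarith
    have hc : 0 < 1 + g21 * x := by
      have h1 : -1 / g21 < x := by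
        rw [neg_div]
        exact lt_of_le_of_lt (neg_le_neg (min_le_right _ _)) hx
      have := (div_lt_iff₀ hg21).mp h1
      linarith
    have hb : 0 < 1 + g21 * x + g22 * P2 := by nlinarith
    have e1 : 1 + g11 * x / A = (A + g11 * x) / A := by field_simp
    have e2 : 1 + g22 * P2 / (1 + g21 * x) = (1 + g21 * x + g22 * P2) / (1 + g21 * x) := by
      field_simp
    rw [hf]
    simp only [e1, e2, Real.logb, Real.log_div hu.ne' hA.ne', Real.log_div hb.ne' hc.ne']
    rw [hgdef]
    ring
  have hC : 0 < 1 + g21 * P11 := by positivity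
  have hu : 0 < A + g11 * P11 := by positivity
  have hB : 0 < 1 + g21 * P11 + g22 * P2 := by positivity
  have h1 : HasDerivAt (fun x => Real.log (A + g11 * x)) (g11 / (A + g11 * P11)) P11 := by
    have hlin : HasDerivAt (fun x : ℝ => A + g11 * x) g11 P11 := by
      simpa using ((hasDerivAt_id P11).const_mul g11).const_add A
    exact hlin.log hu.ne'
  have h2 : HasDerivAt (fun x => Real.log (1 + g21 * x + g22 * P2))
      (g21 / (1 + g21 * P11 + g22 * P2)) P11 := by
    have hlin : HasDerivAt (fun x : ℝ => 1 + g21 * x + g22 * P2) g21 P11 := by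
      simpa using (((hasDerivAt_id P11).const_mul g21).const_add 1).add_const (g22 * P2)
    exact hlin.log hB.ne'
  have h3 : HasDerivAt (fun x => Real.log (1 + g21 * x)) (g21 / (1 + g21 * P11)) P11 := by
    have hlin : HasDerivAt (fun x : ℝ => 1 + g21 * x) g21 P11 := by
      simpa using ((hasDerivAt_id P11).const_mul g21).const_add 1
    exact hlin.log hC.ne'
  have hD : HasDerivAt g ((g11 / (A + g11 * P11) +
      μ * (g21 / (1 + g21 * P11 + g22 * P2) - g21 / (1 + g21 * P11))) / Real.log 2) P11 := by
    rw [hgdef]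
    exact ((h1.sub_const (Real.log A)).add ((h2.sub h3).const_mul μ)).div_const (Real.log 2)
  have hderiv : deriv f P11 = (g11 / (A + g11 * P11) +
      μ * (g21 / (1 + g21 * P11 + g22 * P2) - g21 / (1 + g21 * P11))) / Real.log 2 := by
    rw [heq.deriv_eq, hD.deriv]
  rw [hderiv, div_eq_zero_iff] at hstat
  have key := hstat.resolve_right hlog2
  field_simp at key
  rw [hAdef] at key ⊢
  linear_combination key
end

section
/- Let g11, g12, g21, g22 > 0 and P1, P2 > 0, and set μ = 1. Then the function f(P11) = log2(1 + g11·P11/(1 + g12·P2)) + log2(1 + g22·P2/(1 + g21·P11)) attains its maximum over the interval [0, P1] at an endpoint, i.e., at P11 = 0 or P11 = P1. -/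
theorem sum_rate_single_message_max_at_endpoint
    (g11 g12 g21 g22 P1 P2 : ℝ)
    (hg11 : 0 < g11) (hg12 : 0 < g12) (hg21 : 0 < g21) (hg22 : 0 < g22)
    (hP1 : 0 < P1) (hP2 : 0 < P2)
    (f : ℝ → ℝ)
    (hf : f = fun P11 => Real.logb 2 (1 + g11 * P11 / (1 + g12 * P2)) +
      Real.logb 2 (1 + g22 * P2 / (1 + g21 * P11))) :
    ∃ x, (x = 0 ∨ x = P1) ∧ ∀ y ∈ Set.Icc (0 : ℝ) P1, f y ≤ f x := by
  subst hf
  set A : ℝ := 1 + g12 * P2 with hA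
  have hApos : 0 < A := by positivity
  set c : ℝ := g22 * P2 with hc
  have hcpos : 0 < c := by positivity
  set N : ℝ → ℝ := fun z => (A + g11 * z) * (1 + g21 * z + c) with hN
  set Q : ℝ → ℝ := fun z => N z / (A * (1 + g21 * z)) with hQ
  have hDpos : ∀ z : ℝ, 0 ≤ z → 0 < 1 + g21 * z := by
    intro z hz; nlinarith
  have hNpos : ∀ z : ℝ, 0 ≤ z → 0 < N z := by
    intro z hz
    have hD := hDpos z hz
    have h1 : 0 < A + g11 * z := by nlinarith
    have h2 : 0 < 1 + g21 * z + c := by nlinarith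
    exact mul_pos h1 h2
  have hQpos : ∀ z : ℝ, 0 ≤ z → 0 < Q z := by
    intro z hz
    exact div_pos (hNpos z hz) (mul_pos hApos (hDpos z hz))
  -- f z = logb 2 (Q z) for z ≥ 0
  have hfQ : ∀ z : ℝ, 0 ≤ z →
      Real.logb 2 (1 + g11 * z / A) + Real.logb 2 (1 + c / (1 + g21 * z))
        = Real.logb 2 (Q z) := by
    intro z hz
    have hD := hDpos z hz
    have h1 : (0:ℝ) < 1 + g11 * z / A := by
      have : 0 ≤ g11 * z / A := by positivity
      linarith
    have h2 : (0:ℝ) < 1 + c / (1 + g21 * z) := by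
      have : 0 ≤ c / (1 + g21 * z) := by positivity
      linarith
    rw [← Real.logb_mul (ne_of_gt h1) (ne_of_gt h2)]
    congr 1
    simp only [hQ, hN]
    field_simp
  -- core: Q y ≤ Q 0 or Q y ≤ Q P1
  have core : ∀ y : ℝ, 0 ≤ y → y ≤ P1 → Q y ≤ Q 0 ∨ Q y ≤ Q P1 := by
    intro y hy0 hy1
    have hDy := hDpos y hy0
    have hDP1 := hDpos P1 hP1.le
    rcases le_total (g21 * A) g11 with hcase | hcase
    · -- Q is nondecreasing on [0, P1] : Q y ≤ Q P1
      right
      have hQy : Q y = N y / (A * (1 + g21 * y)) := rfl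
      have hQ1 : Q P1 = N P1 / (A * (1 + g21 * P1)) := rfl
      rw [hQy, hQ1, div_le_div_iff₀ (mul_pos hApos hDy) (mul_pos hApos hDP1)]
      have key : N P1 * (1 + g21 * y) - N y * (1 + g21 * P1)
          = (P1 - y) * (g11 * ((1 + g21 * y) * (1 + g21 * P1)) + c * (g11 - g21 * A)) := by
        simp only [hN]; ring
      have h1 : (0:ℝ) ≤ g11 * ((1 + g21 * y) * (1 + g21 * P1)) + c * (g11 - g21 * A) := by
        nlinarith [mul_pos hg11 (mul_pos hDy hDP1), mul_nonneg hcpos.le (sub_nonneg.mpr hcase)]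
      nlinarith [mul_nonneg (sub_nonneg.mpr hy1) h1]
    · -- convex case: P1 * Q y ≤ (P1 - y) * Q 0 + y * Q P1
      have hid : (P1 - y) * Q 0 + y * Q P1 - P1 * Q y
          = (c * g21 * P1 * y * ((P1 - y) * (g21 * A - g11)))
            / (A * ((1 + g21 * y) * (1 + g21 * P1))) := by
        simp only [hQ, hN]
        field_simp
        ring
      have hnum : 0 ≤ (c * g21 * P1 * y * ((P1 - y) * (g21 * A - g11))) := by
        have := mul_nonneg (sub_nonneg.mpr hy1) (sub_nonneg.mpr hcase)
        positivity
      have hden : 0 < A * ((1 + g21 * y) * (1 + g21 * P1)) := by positivity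
      have hconv : P1 * Q y ≤ (P1 - y) * Q 0 + y * Q P1 := by
        nlinarith [div_nonneg hnum hden.le]
      rcases le_total (Q 0) (Q P1) with h | h
      · right; nlinarith
      · left; nlinarith
  refine ⟨if Q 0 ≤ Q P1 then P1 else 0, ?_, ?_⟩
  · split <;> simp
  · intro y hy
    obtain ⟨hy0, hy1⟩ := hy
    have hgoal : Real.logb 2 (1 + g11 * y / A) + Real.logb 2 (1 + c / (1 + g21 * y))
        ≤ Real.logb 2 (1 + g11 * (if Q 0 ≤ Q P1 then P1 else 0) / A) +
          Real.logb 2 (1 + c / (1 + g21 * (if Q 0 ≤ Q P1 then P1 else 0))) := by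
      rw [hfQ y hy0]
      have hcore := core y hy0 hy1
      split_ifs with h
      · rw [hfQ P1 hP1.le]
        rcases hcore with h' | h'
        · exact Real.logb_le_logb_of_le one_lt_two (hQpos y hy0) (le_trans h' h)
        · exact Real.logb_le_logb_of_le one_lt_two (hQpos y hy0) h'
      · rw [hfQ 0 le_rfl]
        push_neg at h
        rcases hcore with h' | h'
        · exact Real.logb_le_logb_of_le one_lt_two (hQpos y hy0) h'
        · exact Real.logb_le_logb_of_le one_lt_two (hQpos y hy0) (le_trans h' h.le)
    exact hgoal
end

section
/- Let α ∈ (0, π/2). Then the function h(β) = cos²(β − α)/cos²(β) is strictly increasing on the interval [0, π/2). -/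
theorem signal_to_interference_ratio_strictMono
    (α : ℝ) (hα : α ∈ Set.Ioo 0 (Real.pi / 2)) :
    StrictMonoOn (fun β => Real.cos (β - α) ^ 2 / Real.cos β ^ 2)
      (Set.Ico 0 (Real.pi / 2)) := by
  obtain ⟨hα0, hα2⟩ := hα
  intro x hx y hy hxy
  obtain ⟨hx0, hx2⟩ := hx
  obtain ⟨hy0, hy2⟩ := hy
  have hcx : 0 < Real.cos x := Real.cos_pos_of_mem_Ioo ⟨by linarith [Real.pi_pos], hx2⟩
  have hcy : 0 < Real.cos y := Real.cos_pos_of_mem_Ioo ⟨by linarith [Real.pi_pos], hy2⟩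
  have hcxa : 0 < Real.cos (x - α) := Real.cos_pos_of_mem_Ioo ⟨by linarith, by linarith⟩
  have hcya : 0 < Real.cos (y - α) := Real.cos_pos_of_mem_Ioo ⟨by linarith, by linarith⟩
  have hsa : 0 < Real.sin α := Real.sin_pos_of_pos_of_lt_pi hα0 (by linarith [Real.pi_pos])
  have hsin : Real.sin (x - y) < 0 :=
    Real.sin_neg_of_neg_of_neg_pi_lt (by linarith) (by linarith [Real.pi_pos])
  rw [Real.sin_sub] at hsin
  have key : Real.cos (x - α) * Real.cos y < Real.cos (y - α) * Real.cos x := by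
    rw [Real.cos_sub, Real.cos_sub]
    nlinarith
  simp only
  rw [div_lt_div_iff₀ (by positivity) (by positivity)]
  nlinarith [mul_pos hcxa hcy, mul_pos hcya hcx]
end

section
/- Let H be a complex inner product space, let h1, h2 ∈ H be nonzero with g1 = ‖h1‖², g2 = ‖h2‖², and let u = h1/‖h1‖, w = h2/‖h2‖ satisfy 0 < |⟨w, u⟩| < 1. Set α = arccos|⟨w, u⟩| ∈ (0, π/2). For β ∈ [0, π/2], define v = (cos β / cos α)·⟨w, u⟩·w + (sin β / sin α)·(u − ⟨w, u⟩·w). Then |⟨h1, v⟩|² = g1·cos²(β − α) and |⟨h2, v⟩|² = g2·cos²(β). -/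
open scoped InnerProductSpace

theorem beamforming_vector_channel_gains
    {H : Type*} [NormedAddCommGroup H] [InnerProductSpace ℂ H]
    (h1 h2 : H) (hh1 : h1 ≠ 0) (hh2 : h2 ≠ 0)
    (g1 g2 : ℝ) (hg1 : g1 = ‖h1‖ ^ 2) (hg2 : g2 = ‖h2‖ ^ 2)
    (u w : H) (hu : u = ‖h1‖⁻¹ • h1) (hw : w = ‖h2‖⁻¹ • h2)
    (c : ℂ) (hc : c = ⟪w, u⟫_ℂ)
    (hc0 : 0 < ‖c‖) (hc1 : ‖c‖ < 1)
    (α : ℝ) (hα : α = Real.arccos ‖c‖)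
    (β : ℝ) (hβ : β ∈ Set.Icc 0 (Real.pi / 2))
    (v : H)
    (hv : v = ((Real.cos β / Real.cos α : ℝ) : ℂ) • (c • w) +
      ((Real.sin β / Real.sin α : ℝ) : ℂ) • (u - c • w)) :
    ‖⟪h1, v⟫_ℂ‖ ^ 2 = g1 * Real.cos (β - α) ^ 2 ∧
    ‖⟪h2, v⟫_ℂ‖ ^ 2 = g2 * Real.cos β ^ 2 := by
  set r := ‖c‖ with hr
  have hn1 : ‖h1‖ ≠ 0 := norm_ne_zero_iff.mpr hh1
  have hn2 : ‖h2‖ ≠ 0 := norm_ne_zero_iff.mpr hh2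
  have hca : Real.cos α = r := by
    rw [hα, Real.cos_arccos (le_trans (by norm_num) hc0.le) hc1.le]
  have hsa : Real.sin α = Real.sqrt (1 - r ^ 2) := by
    rw [hα, Real.sin_arccos]
  have h1mr : 0 < 1 - r ^ 2 := by nlinarith
  have hsa_pos : 0 < Real.sin α := by rw [hsa]; exact Real.sqrt_pos.mpr h1mr
  have hsq : Real.sin α ^ 2 = 1 - r ^ 2 := by rw [hsa]; exact Real.sq_sqrt h1mr.le
  have hnu : ‖u‖ = 1 := by
    rw [hu, norm_smul, norm_inv, norm_norm, inv_mul_cancel₀ hn1]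
  have hnw : ‖w‖ = 1 := by
    rw [hw, norm_smul, norm_inv, norm_norm, inv_mul_cancel₀ hn2]
  have huu : ⟪u, u⟫_ℂ = 1 := by
    rw [inner_self_eq_norm_sq_to_K, hnu]; norm_num
  have hww : ⟪w, w⟫_ℂ = 1 := by
    rw [inner_self_eq_norm_sq_to_K, hnw]; norm_num
  have huw : ⟪u, w⟫_ℂ = starRingEnd ℂ c := by rw [hc, ← inner_conj_symm]
  have hcc : c * starRingEnd ℂ c = ((r ^ 2 : ℝ) : ℂ) := by
    rw [Complex.mul_conj']
    simp [hr]
  have hh1u : h1 = ((‖h1‖ : ℝ) : ℂ) • u := by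
    rw [hu, Complex.coe_smul, smul_smul, mul_inv_cancel₀ hn1, one_smul]
  have hh2w : h2 = ((‖h2‖ : ℝ) : ℂ) • w := by
    rw [hw, Complex.coe_smul, smul_smul, mul_inv_cancel₀ hn2, one_smul]
  have hreal : Real.cos β / Real.cos α * r ^ 2 +
      Real.sin β / Real.sin α * (1 - r ^ 2) = Real.cos (β - α) := by
    rw [Real.cos_sub, hca, ← hsq]
    field_simp
  have hrealC : ((Real.cos β / Real.cos α : ℝ) : ℂ) * ((r ^ 2 : ℝ) : ℂ) +
      ((Real.sin β / Real.sin α : ℝ) : ℂ) * (1 - ((r ^ 2 : ℝ) : ℂ)) =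
      ((Real.cos (β - α) : ℝ) : ℂ) := by
    rw [← hreal]; push_cast; ring
  have huv : ⟪u, v⟫_ℂ = ((Real.cos (β - α) : ℝ) : ℂ) := by
    rw [hv]
    simp only [inner_add_right, inner_smul_right, inner_sub_right, huu, huw]
    linear_combination hrealC + (((Real.cos β / Real.cos α : ℝ) : ℂ) -
      ((Real.sin β / Real.sin α : ℝ) : ℂ)) * hcc
  have hwv : ⟪w, v⟫_ℂ = ((Real.cos β / Real.cos α : ℝ) : ℂ) * c := by
    rw [hv]
    simp only [inner_add_right, inner_smul_right, inner_sub_right, hww, ← hc]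
    ring
  constructor
  · rw [hh1u, inner_smul_left, huv, Complex.conj_ofReal, hg1]
    rw [← Complex.ofReal_mul, Complex.norm_real, Real.norm_eq_abs, sq_abs]
    ring
  · rw [hh2w, inner_smul_left, hwv, Complex.conj_ofReal, hg2]
    rw [norm_mul, norm_mul, Complex.norm_real, Complex.norm_real, ← hr, hca, Real.norm_eq_abs, Real.norm_eq_abs]
    rw [mul_pow, mul_pow, sq_abs, sq_abs]
    have hx : (Real.cos β / r) ^ 2 * r ^ 2 = Real.cos β ^ 2 := by
      field_simp
    rw [hx]
end

section
/- Let g11, g12, g21, g22 > 0 and let (P11, P21, P12, P22) be nonnegative reals with g11·P11 + g12·P12 > 0 and g21·P21 + g22·P22 > 0. Then for every t > 1, scaling all four powers by t strictly increases both rates: R1(t·P11, t·P21, t·P12, t·P22) > R1(P11, P21, P12, P22) and R2(t·P11, t·P21, t·P12, t·P22) > R2(P11, P21, P12, P22). Consequently, at any point on the rate region frontier with both rates positive, at least one of the per-base-station power constraints must be binding. -/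
set_option maxHeartbeats 1000000


/-- Scaling strictly increases the SINR-type expression, hence the logb. -/
lemma logb_sinr_lt (S I t : ℝ) (hS : 0 < S) (hI : 0 ≤ I) (ht : 1 < t) :
    Real.logb 2 (1 + S / (1 + I)) < Real.logb 2 (1 + t * S / (1 + t * I)) := by
  have hD1 : (0:ℝ) < 1 + I := by linarith
  have hD2 : (0:ℝ) < 1 + t * I := by nlinarith
  apply Real.logb_lt_logb one_lt_two
  · positivity
  · have h : S / (1 + I) < t * S / (1 + t * I) := by
      rw [div_lt_div_iff₀ hD1 hD2]; nlinarith
    linarith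

theorem scaling_increases_rates_and_frontier_binding
    (g11 g12 g21 g22 : ℝ)
    (hg11 : 0 < g11) (hg12 : 0 < g12) (hg21 : 0 < g21) (hg22 : 0 < g22)
    (P11 P21 P12 P22 : ℝ)
    (hP11 : 0 ≤ P11) (hP21 : 0 ≤ P21) (hP12 : 0 ≤ P12) (hP22 : 0 ≤ P22)
    (hpos1 : 0 < g11 * P11 + g12 * P12) (hpos2 : 0 < g21 * P21 + g22 * P22) :
    (∀ t : ℝ, 1 < t →
      rate1 g11 g12 P11 P21 P12 P22 <
        rate1 g11 g12 (t * P11) (t * P21) (t * P12) (t * P22) ∧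
      rate2 g21 g22 P11 P21 P12 P22 <
        rate2 g21 g22 (t * P11) (t * P21) (t * P12) (t * P22)) ∧
    (∀ P1 P2 R1 R2 : ℝ, 0 < P1 → 0 < P2 → 0 < R1 → 0 < R2 →
      feasible P1 P2 P11 P21 P12 P22 →
      rate1 g11 g12 P11 P21 P12 P22 = R1 →
      rate2 g21 g22 P11 P21 P12 P22 = R2 →
      (∀ Q11 Q21 Q12 Q22, feasible P1 P2 Q11 Q21 Q12 Q22 →
        rate1 g11 g12 Q11 Q21 Q12 Q22 = R1 → rate2 g21 g22 Q11 Q21 Q12 Q22 ≤ R2) →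
      P11 + P21 = P1 ∨ P12 + P22 = P2) := by
  have key : ∀ t : ℝ, 1 < t →
      rate1 g11 g12 P11 P21 P12 P22 <
        rate1 g11 g12 (t * P11) (t * P21) (t * P12) (t * P22) ∧
      rate2 g21 g22 P11 P21 P12 P22 <
        rate2 g21 g22 (t * P11) (t * P21) (t * P12) (t * P22) := by
    intro t ht
    constructor
    · have h := logb_sinr_lt (g11 * P11 + g12 * P12) (g11 * P21 + g12 * P22) t hpos1
        (by positivity) ht
      simp only [rate1]
      rw [show g11 * (t * P11) + g12 * (t * P12) = t * (g11 * P11 + g12 * P12) by ring,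
        show (1:ℝ) + g11 * (t * P21) + g12 * (t * P22) = 1 + t * (g11 * P21 + g12 * P22) by ring,
        show (1:ℝ) + g11 * P21 + g12 * P22 = 1 + (g11 * P21 + g12 * P22) by ring]
      exact h
    · have h := logb_sinr_lt (g21 * P21 + g22 * P22) (g21 * P11 + g22 * P12) t hpos2
        (by positivity) ht
      simp only [rate2]
      rw [show g21 * (t * P21) + g22 * (t * P22) = t * (g21 * P21 + g22 * P22) by ring,
        show (1:ℝ) + g21 * (t * P11) + g22 * (t * P12) = 1 + t * (g21 * P11 + g22 * P12) by ring,
        show (1:ℝ) + g21 * P11 + g22 * P12 = 1 + (g21 * P11 + g22 * P12) by ring]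
      exact h
  refine ⟨key, ?_⟩
  intro P1 P2 R1 R2 hP1 hP2 hR1 hR2 hfeas hr1 hr2 hopt
  by_contra hcon
  push_neg at hcon
  obtain ⟨hne1, hne2⟩ := hcon
  obtain ⟨_, _, _, _, hs1, hs2⟩ := hfeas
  have hs1' : P11 + P21 < P1 := lt_of_le_of_ne hs1 hne1
  have hs2' : P12 + P22 < P2 := lt_of_le_of_ne hs2 hne2
  set δ : ℝ := min ((P1 - (P11 + P21)) / P1) ((P2 - (P12 + P22)) / P2) with hδdef
  have hδpos : 0 < δ := lt_min (div_pos (by linarith) hP1) (div_pos (by linarith) hP2)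
  set t : ℝ := 1 + δ with htdef
  have ht : 1 < t := by simp [htdef]; linarith
  have ht0 : 0 < t := by linarith
  -- scaled point is feasible
  have hscale1 : t * P11 + t * P21 ≤ P1 := by
    have h1 : δ ≤ (P1 - (P11 + P21)) / P1 := min_le_left _ _
    have h2 : δ * (P11 + P21) ≤ (P1 - (P11 + P21)) / P1 * (P11 + P21) :=
      mul_le_mul_of_nonneg_right h1 (by linarith)
    have h3 : (P1 - (P11 + P21)) / P1 * (P11 + P21) ≤ P1 - (P11 + P21) := by
      rw [div_mul_eq_mul_div, div_le_iff₀ hP1]; nlinarith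
    have : t * P11 + t * P21 = (P11 + P21) + δ * (P11 + P21) := by rw [htdef]; ring
    linarith
  have hscale2 : t * P12 + t * P22 ≤ P2 := by
    have h1 : δ ≤ (P2 - (P12 + P22)) / P2 := min_le_right _ _
    have h2 : δ * (P12 + P22) ≤ (P2 - (P12 + P22)) / P2 * (P12 + P22) :=
      mul_le_mul_of_nonneg_right h1 (by linarith)
    have h3 : (P2 - (P12 + P22)) / P2 * (P12 + P22) ≤ P2 - (P12 + P22) := by
      rw [div_mul_eq_mul_div, div_le_iff₀ hP2]; nlinarith
    have : t * P12 + t * P22 = (P12 + P22) + δ * (P12 + P22) := by rw [htdef]; ring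
    linarith
  obtain ⟨hrate1t, hrate2t⟩ := key t ht
  rw [hr1] at hrate1t
  rw [hr2] at hrate2t
  -- the scaled rate1 written in SINR form
  set D : ℝ := 1 + g11 * (t * P21) + g12 * (t * P22) with hDdef
  have hD : 0 < D := by have := mul_nonneg ht0.le hP21; have := mul_nonneg ht0.le hP22; positivity
  set A : ℝ := (g11 * (t * P11) + g12 * (t * P12)) / D with hAdef
  have hA : 0 < A := by
    apply div_pos _ hD
    nlinarith
  have hrate1t' : R1 < Real.logb 2 (1 + A) := by
    simpa [rate1, hAdef, hDdef] using hrate1t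
  have h2R1 : (1:ℝ) < (2:ℝ) ^ R1 := by
    have : (2:ℝ) ^ (0:ℝ) < (2:ℝ) ^ R1 :=
      Real.rpow_lt_rpow_left_iff one_lt_two |>.mpr hR1
    simpa using this
  have hlt : (2:ℝ) ^ R1 < 1 + A := by
    have h1A : 0 < 1 + A := by linarith
    exact (Real.lt_logb_iff_rpow_lt one_lt_two h1A).mp hrate1t'
  set s : ℝ := ((2:ℝ) ^ R1 - 1) / A with hsdef
  have hspos : 0 < s := div_pos (by linarith) hA
  have hsle : s ≤ 1 := by
    rw [hsdef, div_le_one hA]; linarith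
  have hsA : s * A = (2:ℝ) ^ R1 - 1 := by
    rw [hsdef]; field_simp
  -- the contradiction point
  have hQfeas : feasible P1 P2 (s * (t * P11)) (t * P21) (s * (t * P12)) (t * P22) := by
    refine ⟨by positivity, by positivity, by positivity, by positivity, ?_, ?_⟩
    · have : s * (t * P11) ≤ t * P11 := by nlinarith [mul_nonneg ht0.le hP11]
      linarith
    · have : s * (t * P12) ≤ t * P12 := by nlinarith [mul_nonneg ht0.le hP12]
      linarith
  have hQr1 : rate1 g11 g12 (s * (t * P11)) (t * P21) (s * (t * P12)) (t * P22) = R1 := by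
    have hnum : g11 * (s * (t * P11)) + g12 * (s * (t * P12))
        = s * (g11 * (t * P11) + g12 * (t * P12)) := by ring
    have : (1:ℝ) + (g11 * (s * (t * P11)) + g12 * (s * (t * P12))) / D = (2:ℝ) ^ R1 := by
      rw [hnum, mul_div_assoc, ← hAdef, hsA]; ring
    simp only [rate1, ← hDdef, this]
    exact Real.logb_rpow (by norm_num) (by norm_num)
  have hQr2 : rate2 g21 g22 (t * P11) (t * P21) (t * P12) (t * P22)
      ≤ rate2 g21 g22 (s * (t * P11)) (t * P21) (s * (t * P12)) (t * P22) := by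
    simp only [rate2]
    have hN : 0 < g21 * (t * P21) + g22 * (t * P22) := by nlinarith
    have hD1 : 0 < 1 + g21 * (s * (t * P11)) + g22 * (s * (t * P12)) := by positivity
    have hD2 : 0 < 1 + g21 * (t * P11) + g22 * (t * P12) := by
      have := mul_nonneg ht0.le hP11; have := mul_nonneg ht0.le hP12; positivity
    have hDle : 1 + g21 * (s * (t * P11)) + g22 * (s * (t * P12))
        ≤ 1 + g21 * (t * P11) + g22 * (t * P12) := by
      have h1 : s * (t * P11) ≤ t * P11 := by nlinarith [mul_nonneg ht0.le hP11]
      have h2 : s * (t * P12) ≤ t * P12 := by nlinarith [mul_nonneg ht0.le hP12]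
      nlinarith
    apply Real.logb_le_logb_of_le one_lt_two (by positivity)
    have := div_le_div_of_nonneg_left hN.le hD1 hDle
    linarith
  have := hopt _ _ _ _ hQfeas hQr1
  linarith
end

section
/- Let g11, g12, g21, g22 > 0, P1, P2 > 0 and R1 ≥ 0. Suppose (P11, P21, P12, P22) is a feasible power allocation whose user-1 rate equals R1. Define Z = 1/(1 + g21·P11 + g22·P12) and P̃_{jk} = Z·P_{jk} for j, k = 1, 2. Then (P̃_{11}, P̃_{21}, P̃_{12}, P̃_{22}, Z) satisfies: Z > 0; g11·P̃11 + g12·P̃12 − (2^{R1} − 1)·(g11·P̃21 + g12·P̃22 + Z) = 0; P̃_{1k} + P̃_{2k} − P_k·Z ≤ 0 for k = 1, 2; g21·P̃11 + g22·P̃12 + Z = 1; and the linear objective g21·P̃21 + g22·P̃22 equals 2^{R2} − 1, where R2 is the user-2 rate of the original allocation. -/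
theorem linear_fractional_to_linear_program
    (g11 g12 g21 g22 P1 P2 R1 : ℝ)
    (hg11 : 0 < g11) (hg12 : 0 < g12) (hg21 : 0 < g21) (hg22 : 0 < g22)
    (hP1 : 0 < P1) (hP2 : 0 < P2) (hR1 : 0 ≤ R1)
    (P11 P21 P12 P22 : ℝ)
    (hfeas : feasible P1 P2 P11 P21 P12 P22)
    (hrate : rate1 g11 g12 P11 P21 P12 P22 = R1)
    (Z : ℝ) (hZ : Z = 1 / (1 + g21 * P11 + g22 * P12)) :
    0 < Z ∧
    g11 * (Z * P11) + g12 * (Z * P12) -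
      ((2 : ℝ) ^ R1 - 1) * (g11 * (Z * P21) + g12 * (Z * P22) + Z) = 0 ∧
    (Z * P11) + (Z * P21) - P1 * Z ≤ 0 ∧
    (Z * P12) + (Z * P22) - P2 * Z ≤ 0 ∧
    g21 * (Z * P11) + g22 * (Z * P12) + Z = 1 ∧
    g21 * (Z * P21) + g22 * (Z * P22) =
      (2 : ℝ) ^ (rate2 g21 g22 P11 P21 P12 P22) - 1 := by

  obtain ⟨h11, h21, h12, h22, hb1, hb2⟩ := hfeas
  have hD1 : 0 < 1 + g11 * P21 + g12 * P22 := by positivity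
  have hD2 : 0 < 1 + g21 * P11 + g22 * P12 := by positivity
  have hZpos : 0 < Z := by rw [hZ]; positivity
  have hZD : Z * (1 + g21 * P11 + g22 * P12) = 1 := by
    rw [hZ]; field_simp
  have hnum1 : 0 ≤ (g11 * P11 + g12 * P12) / (1 + g11 * P21 + g12 * P22) := by
    positivity
  have h2R1 : (2 : ℝ) ^ R1 = 1 + (g11 * P11 + g12 * P12) / (1 + g11 * P21 + g12 * P22) := by
    rw [← hrate, rate1]
    exact Real.rpow_logb (by norm_num) (by norm_num) (by linarith)
  have hnum2 : 0 ≤ (g21 * P21 + g22 * P22) / (1 + g21 * P11 + g22 * P12) := by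
    positivity
  have h2R2 : (2 : ℝ) ^ (rate2 g21 g22 P11 P21 P12 P22)
      = 1 + (g21 * P21 + g22 * P22) / (1 + g21 * P11 + g22 * P12) := by
    rw [rate2]
    exact Real.rpow_logb (by norm_num) (by norm_num) (by linarith)
  refine ⟨hZpos, ?_, ?_, ?_, ?_, ?_⟩
  · rw [h2R1]
    field_simp
    ring
  · nlinarith [mul_le_mul_of_nonneg_left hb1 hZpos.le]
  · nlinarith [mul_le_mul_of_nonneg_left hb2 hZpos.le]
  · linear_combination hZD
  · rw [h2R2]
    field_simp
    linear_combination (g21 * P21 + g22 * P22) * hZD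
end
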